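/- arXiv:2101.01982 — 4 statements merged into one kernel-verified Lean document; each statement's English description precedes it below -/
import Mathlib

section
/- Let c ∈ [0,1/2]. Every rational number x ∈ ℚ ∩ [c,1] is a returning point for the random c-Lüroth transformation: for every ω ∈ {0,1}^ℕ there exist an integer n ≥ 0 and an integer r ≥ 1 such that T_ω^n(x) = T_ω^{n+r}(x). -/
open MeasureTheory Filter Set
open scoped Classical ENNReal

noncomputable section

/-- The Lüroth map `T_L`. -/
def TL (x : ℝ) : ℝ :=
  if x = 0 then 0
  else if x = 1 then 1
  else (⌈1/x⌉ : ℝ) * ((⌈1/x⌉ : ℝ) - 1) * x - ((⌈1/x⌉ : ℝ) - 1)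

/-- The alternating Lüroth map `T_A`. -/
def TA (x : ℝ) : ℝ := 1 - TL x

/-- `z_n⁺ = z_n + c·z_n·z_{n-1}`. -/
def zp (c : ℝ) (n : ℕ) : ℝ := 1/(n:ℝ) + c * (1/(n:ℝ)) * (1/((n:ℝ) - 1))

/-- `z_n⁻ = z_n − c·z_n·z_{n+1}`. -/
def zm (c : ℝ) (n : ℕ) : ℝ := 1/(n:ℝ) - c * (1/(n:ℝ)) * (1/((n:ℝ) + 1))

/-- The maps `T_{0,c}` (`j = false`) and `T_{1,c}` (`j = true`); for `c = 0` the points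
`0` and `z_n`, `n ≥ 2`, are additionally sent to `1`. -/
def Tc (j : Bool) (c : ℝ) (x : ℝ) : ℝ :=
  if c = 0 ∧ (x = 0 ∨ ∃ n : ℕ, 2 ≤ n ∧ x = 1/(n:ℝ)) then 1
  else if x = 1 then 1
  else if (j = false ∧ ∃ n : ℕ, 2 ≤ n ∧ 1/(n:ℝ) ≤ x ∧ x < zp c n) ∨
          (j = true ∧ ∃ n : ℕ, 2 ≤ n ∧ 1/(n:ℝ) ≤ x ∧ x ≤ zm c (n-1)) then TA x
  else TL x

/-- Random iteration: `Tom c ω n = T_{ω_n,c} ∘ ⋯ ∘ T_{ω_1,c}` (paths 0-indexed). -/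
def Tom (c : ℝ) (ω : ℕ → Bool) : ℕ → ℝ → ℝ
  | 0 => fun x => x
  | n+1 => fun x => Tc (ω n) c (Tom c ω n x)

/-- The digit `d_{n+1}(ω,x)` (0-indexed: `dig c ω x n` is the digit determined by `T_ω^n x`). -/
def dig (c : ℝ) (ω : ℕ → Bool) (x : ℝ) (n : ℕ) : ℕ :=
  if Tom c ω n x = 1 then 2 else (⌈1/(Tom c ω n x)⌉).toNat

/-- The switch region `S = [c,1] ∩ ⋃_{n≥2} [z_n⁺, z_{n-1}⁻]`. -/
def SwitchS (c : ℝ) : Set ℝ :=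
  {y | y ∈ Set.Icc c 1 ∧ ∃ n : ℕ, 2 ≤ n ∧ zp c n ≤ y ∧ y ≤ zm c (n-1)}

/-- The sign `s_{n+1}(ω,x)` (0-indexed: `sgn c ω x n` is the sign determined by `T_ω^n x`). -/
def sgn (c : ℝ) (ω : ℕ → Bool) (x : ℝ) (n : ℕ) : ℕ :=
  if c = 0 then (if ω n then 1 else 0)
  else if (ω n = false ∧ Tom c ω n x ∈ SwitchS c) ∨
          (∃ d : ℕ, 1 ≤ d ∧ zm c d < Tom c ω n x ∧ Tom c ω n x < 1/(d:ℝ)) ∨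
          Tom c ω n x = 1 then 0
  else 1

/-- The c-Lüroth expansion: `expansion c ω x n = (s_{n+1}(ω,x), d_{n+1}(ω,x))`. -/
def expansion (c : ℝ) (ω : ℕ → Bool) (x : ℝ) (n : ℕ) : ℕ × ℕ :=
  (sgn c ω x n, dig c ω x n)

/-- A sequence is ultimately periodic if some tail is periodic. -/
def UltimatelyPeriodic {α : Type*} (a : ℕ → α) : Prop :=
  ∃ N r : ℕ, 1 ≤ r ∧ ∀ n, N ≤ n → a (n + r) = a n

/-- The `n`-th convergent `p_n/q_n(ω,x)`. -/
def conv (c : ℝ) (ω : ℕ → Bool) (x : ℝ) (n : ℕ) : ℝ :=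
  ∑ k ∈ Finset.range n,
    (-1 : ℝ) ^ (∑ i ∈ Finset.range k, sgn c ω x i) *
      ((dig c ω x k : ℝ) - 1 + (sgn c ω x k : ℝ)) /
      (∏ i ∈ Finset.range (k+1), ((dig c ω x i : ℝ) * ((dig c ω x i : ℝ) - 1)))

/-- The value `Σ_{n≥1} (−1)^{s_1+⋯+s_{n−1}} (d_n − 1 + s_n)/∏_{i≤n} d_i(d_i−1)` of a
sign-digit sequence (0-indexed). -/
def lurothSum (a : ℕ → ℕ × ℕ) : ℝ :=
  ∑' n : ℕ,
    (-1 : ℝ) ^ (∑ i ∈ Finset.range n, (a i).1) *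
      (((a n).2 : ℝ) - 1 + ((a n).1 : ℝ)) /
      (∏ i ∈ Finset.range (n+1), (((a i).2 : ℝ) * (((a i).2 : ℝ) - 1)))

/-- The Bernoulli `(p, 1-p)` product measure on `{0,1}^ℕ` (coordinate `0 ↔ false` has
probability `p`). -/
def IsBernoulli (p : ℝ) (m : Measure (ℕ → Bool)) : Prop :=
  IsProbabilityMeasure m ∧
  ∀ (n : ℕ) (f : Fin n → Bool),
    m {ω : ℕ → Bool | ∀ i : Fin n, ω i = f i} =
      ∏ i : Fin n, ENNReal.ofReal (if f i then 1 - p else p)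

/-- The random 0-Lüroth transformation `L_0`. -/
def L0 (q : (ℕ → Bool) × ℝ) : (ℕ → Bool) × ℝ := (fun n => q.1 (n+1), Tc (q.1 0) 0 q.2)

/-- The `n`-th approximation coefficient `θ_n(ω,x)` (1-indexed `n`). -/
def theta (ω : ℕ → Bool) (x : ℝ) (n : ℕ) : ℝ :=
  ((dig 0 ω x (n-1) : ℝ) - (sgn 0 ω x (n-1) : ℝ)) *
    (∏ i ∈ Finset.range (n-1), ((dig 0 ω x i : ℝ) * ((dig 0 ω x i : ℝ) - 1))) *
    |x - conv 0 ω x n|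

/-- Distribution function `F_L` of the Lüroth approximation coefficients. -/
def FL (y : ℝ) : ℝ := (∑ k ∈ Finset.Icc 2 (⌊1/y⌋₊ + 1), y / (k:ℝ)) + 1/((⌊1/y⌋₊ : ℝ) + 1)

/-- Distribution function `F_A` of the alternating Lüroth approximation coefficients. -/
def FA (y : ℝ) : ℝ := (∑ k ∈ Finset.Icc 2 ⌊1/y⌋₊, y / ((k:ℝ) - 1)) + 1/(⌊1/y⌋₊ : ℝ)

/-- A sequence over the alphabet `A` is universal if every finite word over `A` occurs
in it as a consecutive block. -/
def IsUniversal (A : Set (ℕ × ℕ)) (e : ℕ → ℕ × ℕ) : Prop :=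
  ∀ (m : ℕ) (w : Fin m → ℕ × ℕ), (∀ i, w i ∈ A) →
    ∃ k : ℕ, ∀ i : Fin m, e (k + (i : ℕ)) = w i

/-- `c`-Lüroth admissible sequences. -/
def Admissible (c : ℝ) (a : ℕ → ℕ × ℕ) : Prop :=
  (∀ n, (a n).1 ≤ 1 ∧ 2 ≤ (a n).2 ∧ (a n).2 ≤ ⌈1/c⌉₊) ∧
  (∀ k : ℕ, lurothSum (fun n => a (k + n)) ∈ Set.Icc c 1) ∧
  ¬ ∃ (N d : ℕ), 2 ≤ d ∧ d < ⌈1/c⌉₊ ∧ a N = (0, d+1) ∧ ∀ n, N < n → a n = (0, 2)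

lemma TL_mem (x : ℝ) (hx : x ∈ Set.Icc (0:ℝ) 1) : TL x ∈ Set.Icc (0:ℝ) 1 := by
  unfold TL
  split_ifs with h0 h1
  · simp
  · simp
  · have hx0 : 0 < x := lt_of_le_of_ne hx.1 (Ne.symm h0)
    have hx1 : x < 1 := lt_of_le_of_ne hx.2 h1
    have h1x : 1 < 1/x := by rw [lt_div_iff₀ hx0]; linarith
    have hle : 1/x ≤ ((⌈1/x⌉ : ℤ) : ℝ) := Int.le_ceil _
    have hlt : ((⌈1/x⌉ : ℤ) : ℝ) - 1 < 1/x := by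
      have := Int.ceil_lt_add_one (1/x); linarith
    have hmx : 1 ≤ ((⌈1/x⌉ : ℤ) : ℝ) * x := by
      rw [div_le_iff₀ hx0] at hle; linarith
    have hmx2 : (((⌈1/x⌉ : ℤ) : ℝ) - 1) * x < 1 := by
      have h := mul_lt_mul_of_pos_right hlt hx0
      have h1 : (1/x)*x = 1 := div_mul_cancel₀ 1 hx0.ne'
      linarith
    have hm1 : (1:ℝ) < ((⌈1/x⌉ : ℤ) : ℝ) := lt_of_lt_of_le h1x hle
    constructor
    · nlinarith
    · nlinarith

lemma Tc_mem (j : Bool) (c x : ℝ) (hx : x ∈ Set.Icc (0:ℝ) 1) :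
    Tc j c x ∈ Set.Icc (0:ℝ) 1 := by
  have hTL := TL_mem x hx
  have hTA : TA x ∈ Set.Icc (0:ℝ) 1 := by
    unfold TA; constructor <;> [linarith [hTL.2]; linarith [hTL.1]]
  rw [Set.mem_Icc] at hTL hTA ⊢
  unfold Tc
  split_ifs <;> first | simp | exact hTA | exact hTL

lemma TL_den (D : ℤ) (x : ℝ) (p : ℤ) (hp : (p:ℝ) = x * D) :
    ∃ p' : ℤ, (p':ℝ) = TL x * D := by
  unfold TL
  split_ifs with h0 h1
  · exact ⟨0, by simp⟩
  · exact ⟨D, by simp⟩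
  · exact ⟨⌈1/x⌉*(⌈1/x⌉-1)*p - (⌈1/x⌉-1)*D, by push_cast; rw [hp]; ring⟩

lemma Tc_den (j : Bool) (c : ℝ) (D : ℤ) (x : ℝ) (p : ℤ) (hp : (p:ℝ) = x * D) :
    ∃ p' : ℤ, (p':ℝ) = Tc j c x * D := by
  obtain ⟨p', hp'⟩ := TL_den D x p hp
  have hTA : ∃ p'' : ℤ, (p'':ℝ) = TA x * D :=
    ⟨D - p', by push_cast; rw [TA]; rw [sub_mul, one_mul, hp']⟩
  unfold Tc
  split_ifs <;> first | exact ⟨D, by simp⟩ | exact hTA | exact ⟨p', hp'⟩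

/-- every rational `x ∈ [c,1]` is a returning point for the random
`c`-Lüroth transformation. -/
theorem rational_is_returning (c : ℝ) (hc : c ∈ Set.Icc (0:ℝ) (1/2))
    (x : ℝ) (hx : x ∈ Set.Icc c 1) (hxq : ∃ q : ℚ, (q : ℝ) = x) (ω : ℕ → Bool) :
    ∃ n r : ℕ, 1 ≤ r ∧ Tom c ω n x = Tom c ω (n + r) x := by
  obtain ⟨q, hq⟩ := hxq
  have hc0 : (0:ℝ) ≤ c := hc.1
  have hx01 : x ∈ Set.Icc (0:ℝ) 1 := ⟨le_trans hc0 hx.1, hx.2⟩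
  set D : ℤ := (q.den : ℤ) with hD
  have hDpos : (0:ℝ) < (D:ℝ) := by
    simp only [hD]; exact_mod_cast q.pos
  -- invariant: each iterate lies in [0,1] and has denominator D
  have key : ∀ n : ℕ, Tom c ω n x ∈ Set.Icc (0:ℝ) 1 ∧
      ∃ p : ℤ, (p:ℝ) = Tom c ω n x * D := by
    intro n
    induction n with
    | zero =>
      refine ⟨hx01, ⟨q.num, ?_⟩⟩
      simp only [Tom]
      rw [← hq, hD]
      push_cast
      rw [Rat.cast_def]
      field_simp
    | succ n ih =>
      obtain ⟨hmem, p, hp⟩ := ih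
      exact ⟨Tc_mem _ _ _ hmem, Tc_den _ _ D _ p hp⟩
  -- the integer p lies in [0, D], so pigeonhole applies
  have hmemIcc : ∀ n : ℕ, ⌊Tom c ω n x * D⌋ ∈ Finset.Icc (0:ℤ) D := by
    intro n
    obtain ⟨hmem, p, hp⟩ := key n
    rw [← hp, Int.floor_intCast]
    rw [Finset.mem_Icc]
    constructor
    · have : (0:ℝ) ≤ (p:ℝ) := by rw [hp]; exact mul_nonneg hmem.1 hDpos.le
      exact_mod_cast this
    · have : (p:ℝ) ≤ (D:ℝ) := by
        rw [hp]
        calc Tom c ω n x * D ≤ 1 * D := by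
              exact mul_le_mul_of_nonneg_right hmem.2 hDpos.le
          _ = D := one_mul _
      exact_mod_cast this
  have hrec : ∀ n : ℕ, Tom c ω n x = (⌊Tom c ω n x * D⌋ : ℝ) / D := by
    intro n
    obtain ⟨hmem, p, hp⟩ := key n
    rw [← hp, Int.floor_intCast, hp]
    field_simp
  let f : ℕ → (Finset.Icc (0:ℤ) D) := fun n => ⟨⌊Tom c ω n x * D⌋, hmemIcc n⟩
  obtain ⟨a, b, hab, hfab⟩ := Finite.exists_ne_map_eq_of_infinite f
  have heq : Tom c ω a x = Tom c ω b x := by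
    rw [hrec a, hrec b]
    have : (f a : ℤ) = (f b : ℤ) := by rw [hfab]
    simp only [f] at this
    rw [this]
  rcases lt_or_gt_of_ne hab with h | h
  · exact ⟨a, b - a, Nat.one_le_iff_ne_zero.mpr (Nat.sub_ne_zero_of_lt h),
      by rw [Nat.add_sub_cancel' h.le]; exact heq⟩
  · exact ⟨b, a - b, Nat.one_le_iff_ne_zero.mpr (Nat.sub_ne_zero_of_lt h),
      by rw [Nat.add_sub_cancel' h.le]; exact heq.symm⟩
end
end

section
/- Let c ∈ [0,1/2] and x ∈ ℚ ∩ [c,1]. Suppose there exists y ∈ [c,1] such that x admits two loops u₁ and u₂ at y that are not equivalent. Then the set of c-Lüroth expansions of x (i.e. the set of sequences ((s_n(ω,x), d_n(ω,x)))_{n≥1} over ω ∈ {0,1}^ℕ) that are NOT ultimately periodic is uncountable, while the set of c-Lüroth expansions of x that ARE ultimately periodic is countable. -/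
open MeasureTheory Filter Set
open scoped Classical ENNReal

noncomputable section

-- auxiliary lemmas, part 1: basic Tom lemmas
lemma Tom_congr (c : ℝ) (x : ℝ) : ∀ (n : ℕ) (ω ω' : ℕ → Bool),
    (∀ i < n, ω i = ω' i) → Tom c ω n x = Tom c ω' n x := by
  intro n
  induction n with
  | zero => intro ω ω' _; rfl
  | succ n ih =>
    intro ω ω' h
    show Tc (ω n) c (Tom c ω n x) = Tc (ω' n) c (Tom c ω' n x)
    rw [ih ω ω' (fun i hi => h i (Nat.lt_succ_of_lt hi)), h n (Nat.lt_succ_self n)]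

lemma Tom_add (c : ℝ) (ω : ℕ → Bool) (x : ℝ) (n : ℕ) : ∀ m : ℕ,
    Tom c ω (n + m) x = Tom c (fun i => ω (n + i)) m (Tom c ω n x) := by
  intro m
  induction m with
  | zero => rfl
  | succ m ih =>
    show Tc (ω (n + m)) c (Tom c ω (n + m) x) = _
    rw [ih]; rfl

/-- value form of the sign. -/
def sgnV (c : ℝ) (b : Bool) (t : ℝ) : ℕ :=
  if c = 0 then (if b then 1 else 0)
  else if (b = false ∧ t ∈ SwitchS c) ∨
          (∃ d : ℕ, 1 ≤ d ∧ zm c d < t ∧ t < 1/(d:ℝ)) ∨ t = 1 then 0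
  else 1

/-- value form of the digit. -/
def digV (t : ℝ) : ℕ := if t = 1 then 2 else (⌈1/t⌉).toNat

lemma sgn_eq_sgnV (c : ℝ) (ω : ℕ → Bool) (x : ℝ) (n : ℕ) :
    sgn c ω x n = sgnV c (ω n) (Tom c ω n x) := rfl

lemma dig_eq_digV (c : ℝ) (ω : ℕ → Bool) (x : ℝ) (n : ℕ) :
    dig c ω x n = digV (Tom c ω n x) := rfl

lemma expansion_eq (c : ℝ) (ω : ℕ → Bool) (x : ℝ) (n : ℕ) :
    expansion c ω x n = (sgnV c (ω n) (Tom c ω n x), digV (Tom c ω n x)) := rfl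

lemma digit_exists {t : ℝ} (h0 : 0 < t) (h1 : t < 1) :
    ∃ n : ℕ, 2 ≤ n ∧ ((⌈1/t⌉ : ℤ) : ℝ) = (n : ℝ) ∧ 1/(n:ℝ) ≤ t ∧ t < 1/((n:ℝ)-1) := by
  have h1t : 1 < 1/t := by rw [lt_div_iff₀ h0]; linarith
  have h2 : (1:ℤ) < ⌈1/t⌉ := by
    rwa [Int.lt_ceil, Int.cast_one]
  have hcast : ((⌈1/t⌉ : ℤ) : ℝ) = (((⌈1/t⌉).toNat : ℕ) : ℝ) := by
    exact_mod_cast (Int.toNat_of_nonneg (by omega)).symm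
  refine ⟨(⌈1/t⌉).toNat, ?_, hcast, ?_, ?_⟩
  · omega
  · have hle : 1/t ≤ ((⌈1/t⌉).toNat : ℝ) := by
      rw [← hcast]; exact Int.le_ceil _
    have hNpos : (0:ℝ) < ((⌈1/t⌉).toNat : ℝ) := by
      have : (1:ℕ) ≤ (⌈1/t⌉).toNat := by omega
      exact_mod_cast Nat.lt_of_lt_of_le Nat.zero_lt_one this
    have h' : (1:ℝ) ≤ ((⌈1/t⌉).toNat : ℝ) * t := (div_le_iff₀ h0).1 hle
    rw [div_le_iff₀ hNpos]; linarith
  · have hlt : ((⌈1/t⌉).toNat : ℝ) - 1 < 1/t := by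
      rw [← hcast]
      have := Int.ceil_lt_add_one (1/t)
      linarith
    have hNpos : (0:ℝ) < ((⌈1/t⌉).toNat : ℝ) - 1 := by
      have h2n : (2:ℕ) ≤ (⌈1/t⌉).toNat := by omega
      have : (2:ℝ) ≤ ((⌈1/t⌉).toNat : ℝ) := by exact_mod_cast h2n
      linarith
    have h' : ((⌈1/t⌉).toNat : ℝ) - 1 < 1/t := hlt
    rw [lt_div_iff₀ hNpos]
    rw [lt_div_iff₀ h0] at h'
    nlinarith

lemma digit_unique {t : ℝ} {m n : ℕ} (hm : 2 ≤ m) (hn : 2 ≤ n)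
    (h1 : 1/(m:ℝ) ≤ t) (h2 : t < 1/((m:ℝ)-1))
    (h3 : 1/(n:ℝ) ≤ t) (h4 : t < 1/((n:ℝ)-1)) : m = n := by
  rcases lt_trichotomy m n with h | h | h
  · exfalso
    have hmr : (m:ℝ) ≤ (n:ℝ) - 1 := by
      have : (m:ℕ) + 1 ≤ n := h
      have := (Nat.cast_le (α := ℝ)).2 this
      push_cast at this; linarith
    have hmpos : (0:ℝ) < (m:ℝ) := by positivity
    have : 1/((n:ℝ)-1) ≤ 1/(m:ℝ) := by
      apply one_div_le_one_div_of_le hmpos hmr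
    linarith
  · exact h
  · exfalso
    have hmr : (n:ℝ) ≤ (m:ℝ) - 1 := by
      have : (n:ℕ) + 1 ≤ m := h
      have := (Nat.cast_le (α := ℝ)).2 this
      push_cast at this; linarith
    have hnpos : (0:ℝ) < (n:ℝ) := by positivity
    have : 1/((m:ℝ)-1) ≤ 1/(n:ℝ) := by
      apply one_div_le_one_div_of_le hnpos hmr
    linarith

-- auxiliary lemmas, part 2: arithmetic of zp/zm and the key properties of Tc
lemma zp_eq {c : ℝ} {n : ℕ} (hn : 2 ≤ n) : zp c n = ((n:ℝ) - 1 + c)/((n:ℝ)*((n:ℝ)-1)) := by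
  have hN : (2:ℝ) ≤ (n:ℝ) := by exact_mod_cast hn
  have h1 : (n:ℝ) ≠ 0 := by linarith
  have h2 : (n:ℝ) - 1 ≠ 0 := by linarith
  rw [zp]; field_simp

lemma zm_cast {c : ℝ} {n : ℕ} (hn : 2 ≤ n) : zm c (n-1) = ((n:ℝ) - c)/((n:ℝ)*((n:ℝ)-1)) := by
  have hN : (2:ℝ) ≤ (n:ℝ) := by exact_mod_cast hn
  have hc1 : ((n-1:ℕ):ℝ) = (n:ℝ) - 1 := by
    rw [Nat.cast_sub (by omega : 1 ≤ n)]; norm_num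
  have h1 : (n:ℝ) ≠ 0 := by linarith
  have h2 : (n:ℝ) - 1 ≠ 0 := by linarith
  rw [zm, hc1]
  have h3 : (n:ℝ) - 1 + 1 = (n:ℝ) := by ring
  rw [h3, eq_div_iff (by positivity : ((n:ℝ)*((n:ℝ)-1)) ≠ 0)]
  field_simp

lemma zmd_ge {c : ℝ} {d : ℕ} (hc1 : c ≤ 1) (hd : 1 ≤ d) : 1/((d:ℝ)+1) ≤ zm c d := by
  have hD : (1:ℝ) ≤ (d:ℝ) := by exact_mod_cast hd
  have e : zm c d = (((d:ℝ)+1)-c)/((d:ℝ)*((d:ℝ)+1)) := by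
    have h1 : (d:ℝ) ≠ 0 := by linarith
    have h2 : (d:ℝ) + 1 ≠ 0 := by linarith
    rw [zm, eq_div_iff (by nlinarith : ((d:ℝ)*((d:ℝ)+1)) ≠ 0)]
    field_simp
  have hp1 : (0:ℝ) < (d:ℝ)+1 := by linarith
  have hp2 : (0:ℝ) < (d:ℝ)*((d:ℝ)+1) := by nlinarith
  rw [e, div_le_div_iff₀ hp1 hp2]
  nlinarith


set_option maxHeartbeats 1000000 in
lemma Tc_key {c t : ℝ} (hc0 : 0 ≤ c) (hc2 : c ≤ 1/2) (ht0 : c ≤ t) (ht1 : t ≤ 1) :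
    (∀ b, Tc b c t ∈ Set.Icc c 1) ∧
    (∀ b b', sgnV c b t = sgnV c b' t → Tc b c t = Tc b' c t) := by
  have hc1 : c ≤ 1 := le_trans hc2 (by norm_num)
  by_cases hsp : c = 0 ∧ (t = 0 ∨ ∃ n : ℕ, 2 ≤ n ∧ t = 1/(n:ℝ))
  · have h1 : ∀ b : Bool, Tc b c t = 1 := fun b => by rw [Tc, if_pos hsp]
    exact ⟨fun b => by rw [h1]; exact ⟨hc1, le_refl 1⟩, fun b b' _ => by rw [h1, h1]⟩
  by_cases hone : t = 1
  · have h1 : ∀ b : Bool, Tc b c t = 1 := fun b => by rw [Tc, if_neg hsp, if_pos hone]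
    exact ⟨fun b => by rw [h1]; exact ⟨hc1, le_refl 1⟩, fun b b' _ => by rw [h1, h1]⟩
  -- main case
  have htlt : t < 1 := lt_of_le_of_ne ht1 hone
  have ht0' : 0 < t := by
    rcases lt_or_eq_of_le hc0 with h | h
    · exact lt_of_lt_of_le h ht0
    · have hne : t ≠ 0 := fun h0 => hsp ⟨h.symm, Or.inl h0⟩
      exact lt_of_le_of_ne (le_trans hc0 ht0) (Ne.symm hne)
  obtain ⟨n, hn2, hcast, h1n, h2n⟩ := digit_exists ht0' htlt
  have hN2 : (2:ℝ) ≤ (n:ℝ) := by exact_mod_cast hn2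
  have hN0 : (0:ℝ) < (n:ℝ) := by linarith
  have hN1 : (0:ℝ) < (n:ℝ) - 1 := by linarith
  have hprod : (0:ℝ) < (n:ℝ)*((n:ℝ)-1) := by positivity
  have hTL : TL t = (n:ℝ)*((n:ℝ)-1)*t - ((n:ℝ)-1) := by
    rw [TL, if_neg (ne_of_gt ht0'), if_neg hone, hcast]
  have hTA : TA t = 1 - ((n:ℝ)*((n:ℝ)-1)*t - ((n:ℝ)-1)) := by rw [TA, hTL]
  have hzp : zp c n = ((n:ℝ) - 1 + c)/((n:ℝ)*((n:ℝ)-1)) := zp_eq hn2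
  have hzm : zm c (n-1) = ((n:ℝ) - c)/((n:ℝ)*((n:ℝ)-1)) := zm_cast hn2
  have hexF : (∃ m : ℕ, 2 ≤ m ∧ 1/(m:ℝ) ≤ t ∧ t < zp c m) ↔ t < zp c n := by
    constructor
    · rintro ⟨m, hm2, hma, hmb⟩
      have hM2 : (2:ℝ) ≤ (m:ℝ) := by exact_mod_cast hm2
      have hkey : zp c m ≤ 1/((m:ℝ)-1) := by
        rw [zp_eq hm2, div_le_div_iff₀ (by nlinarith) (by linarith)]
        nlinarith
      have := digit_unique hm2 hn2 hma (lt_of_lt_of_le hmb hkey) h1n h2n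
      rwa [this] at hmb
    · intro h; exact ⟨n, hn2, h1n, h⟩
  have hexT : (∃ m : ℕ, 2 ≤ m ∧ 1/(m:ℝ) ≤ t ∧ t ≤ zm c (m-1)) ↔ t ≤ zm c (n-1) := by
    constructor
    · rintro ⟨m, hm2, hma, hmb⟩
      have hM2 : (2:ℝ) ≤ (m:ℝ) := by exact_mod_cast hm2
      have hlt : t < 1/((m:ℝ)-1) := by
        rcases lt_or_eq_of_le hc0 with hcpos | hceq
        · have hk : zm c (m-1) < 1/((m:ℝ)-1) := by
            rw [zm_cast hm2, div_lt_div_iff₀ (by nlinarith) (by linarith)]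
            nlinarith
          linarith
        · have hk : zm c (m-1) ≤ 1/((m:ℝ)-1) := by
            rw [zm_cast hm2, ← hceq]
            rw [div_le_div_iff₀ (by nlinarith) (by linarith)]
            nlinarith
          rcases lt_or_eq_of_le (le_trans hmb hk) with h | h
          · exact h
          · exfalso
            rcases Nat.lt_or_ge m 3 with hm3 | hm3
            · have hm2' : m = 2 := by omega
              subst hm2'
              norm_num at h
              exact hone h
            · apply hsp
              refine ⟨hceq.symm, Or.inr ⟨m-1, by omega, ?_⟩⟩
              have hcc : ((m-1:ℕ):ℝ) = (m:ℝ) - 1 := by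
                rw [Nat.cast_sub (by omega : 1 ≤ m)]; norm_num
              rw [h, hcc]
      have := digit_unique hm2 hn2 hma hlt h1n h2n
      rwa [this] at hmb
    · intro h; exact ⟨n, hn2, h1n, h⟩
  have hTc : ∀ b : Bool, Tc b c t =
      if (b = false ∧ t < zp c n) ∨ (b = true ∧ t ≤ zm c (n-1)) then TA t else TL t := by
    intro b
    rw [Tc, if_neg hsp, if_neg hone]
    simp only [hexF, hexT]
  have hzpzm : zp c n ≤ zm c (n-1) := by
    rw [hzp, hzm]
    exact (div_le_div_iff_of_pos_right hprod).2 (by linarith)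
  have h1n' : (1:ℝ) ≤ t * (n:ℝ) := by
    have := h1n; rw [div_le_iff₀ hN0] at this; linarith
  have h2n' : t * ((n:ℝ)-1) < 1 := by
    have := h2n; rw [lt_div_iff₀ hN1] at this; linarith
  have hmem : ∀ b, Tc b c t ∈ Set.Icc c 1 := by
    intro b
    rw [hTc b]
    split_ifs with hcond
    · have htzm : t ≤ zm c (n-1) := by
        rcases hcond with ⟨_, h⟩ | ⟨_, h⟩
        · exact le_of_lt (lt_of_lt_of_le h hzpzm)
        · exact h
      rw [hzm, le_div_iff₀ hprod] at htzm
      rw [hTA]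
      constructor <;> nlinarith
    · rw [hTL]
      push_neg at hcond
      obtain ⟨hF, hT⟩ := hcond
      cases b with
      | false =>
        have hzt := hF rfl
        rw [hzp, div_le_iff₀ hprod] at hzt
        constructor <;> nlinarith
      | true =>
        have hzt := hT rfl
        rw [hzm, div_lt_iff₀ hprod] at hzt
        constructor <;> nlinarith
  refine ⟨hmem, ?_⟩
  intro b b' hs
  rcases eq_or_ne b b' with rfl | hbb
  · rfl
  by_cases hczero : c = 0
  · exfalso
    unfold sgnV at hs
    rw [if_pos hczero, if_pos hczero] at hs
    cases b <;> cases b' <;> simp_all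
  have _hcpos : 0 < c := lt_of_le_of_ne hc0 (Ne.symm hczero)
  rcases lt_or_ge t (zp c n) with hA | hge
  · have hall : ∀ b0 : Bool, Tc b0 c t = TA t := by
      intro b0; rw [hTc b0, if_pos]
      cases b0
      · exact Or.inl ⟨rfl, hA⟩
      · exact Or.inr ⟨rfl, le_trans (le_of_lt hA) hzpzm⟩
    rw [hall b, hall b']
  rcases le_or_gt t (zm c (n-1)) with hBm | hC
  · exfalso
    have hSw : t ∈ SwitchS c := ⟨⟨ht0, ht1⟩, n, hn2, hge, hBm⟩
    have hnd : ¬ (∃ d : ℕ, 1 ≤ d ∧ zm c d < t ∧ t < 1/(d:ℝ)) := by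
      rintro ⟨d, hd1, hd2, hd3⟩
      have hD1 : (1:ℝ) ≤ (d:ℝ) := by exact_mod_cast hd1
      have hge' : 1/((d:ℝ)+1) ≤ t := le_trans (zmd_ge hc1 hd1) (le_of_lt hd2)
      have hcast2 : ((d+1:ℕ):ℝ) = (d:ℝ)+1 := by push_cast; ring
      have hdu : d+1 = n := by
        apply digit_unique (by omega) hn2 ?_ ?_ h1n h2n
        · rw [hcast2]; exact hge'
        · rw [hcast2]
          have he : (d:ℝ)+1-1 = (d:ℝ) := by ring
          rw [he]; exact hd3
      have hlast : zm c (n-1) < t := by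
        rw [← hdu]; simpa using hd2
      linarith
    have h0 : sgnV c false t = 0 := by
      unfold sgnV; rw [if_neg hczero, if_pos (Or.inl ⟨rfl, hSw⟩)]
    have h1' : sgnV c true t = 1 := by
      unfold sgnV; rw [if_neg hczero, if_neg]
      rintro (⟨h, _⟩ | h | h)
      · simp at h
      · exact hnd h
      · exact hone h
    cases b <;> cases b' <;> simp_all
  · have hall : ∀ b0 : Bool, Tc b0 c t = TL t := by
      intro b0; rw [hTc b0, if_neg]
      rintro (⟨_, h⟩ | ⟨_, h⟩)
      · exact absurd h (not_lt.2 (le_of_lt (lt_of_le_of_lt hzpzm hC)))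
      · linarith
    rw [hall b, hall b']

-- auxiliary lemmas, part 3: trajectory lemmas, countability, Cantor
lemma Tom_mem {c x : ℝ} (hc0 : 0 ≤ c) (hc2 : c ≤ 1/2) (hx : x ∈ Set.Icc c 1)
    (ω : ℕ → Bool) (n : ℕ) : Tom c ω n x ∈ Set.Icc c 1 := by
  induction n with
  | zero => exact hx
  | succ n ih => exact (Tc_key hc0 hc2 ih.1 ih.2).1 (ω n)

lemma traj_eq {c y : ℝ} (hc0 : 0 ≤ c) (hc2 : c ≤ 1/2) (hy : y ∈ Set.Icc c 1)
    (ω ω' : ℕ → Bool) (m : ℕ)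
    (h : ∀ j < m, sgnV c (ω j) (Tom c ω j y) = sgnV c (ω' j) (Tom c ω' j y)) :
    ∀ j ≤ m, Tom c ω j y = Tom c ω' j y := by
  intro j
  induction j with
  | zero => intro _; rfl
  | succ j ih =>
    intro hj
    have heq := ih (le_trans (Nat.le_succ j) hj)
    show Tc (ω j) c (Tom c ω j y) = Tc (ω' j) c (Tom c ω' j y)
    rw [← heq]
    have hmem := Tom_mem hc0 hc2 hy ω j
    apply (Tc_key hc0 hc2 hmem.1 hmem.2).2
    have hs := h j (Nat.lt_of_succ_le hj)
    rwa [← heq] at hs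

lemma up_countable : {e : ℕ → ℕ × ℕ | UltimatelyPeriodic e}.Countable := by
  set F : (ℕ × ℕ × List (ℕ × ℕ)) → (ℕ → ℕ × ℕ) := fun p n =>
    if n < p.1 + (p.2.1 + 1) then p.2.2.getD n (0,0)
    else p.2.2.getD (p.1 + (n - p.1) % (p.2.1+1)) (0,0) with hF
  apply Set.Countable.mono _ (Set.countable_range F)
  intro e he
  obtain ⟨N, r, hr1, hper⟩ := he
  have key : ∀ k, e (N + k) = e (N + k % r) := by
    intro k
    induction k using Nat.strong_induction_on with
    | _ k ih =>
      by_cases hk : k < r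
      · rw [Nat.mod_eq_of_lt hk]
      · push_neg at hk
        have h2 : N + k = (N + (k - r)) + r := by omega
        rw [h2, hper (N + (k-r)) (by omega), ih (k-r) (by omega),
          Nat.mod_eq_sub_mod hk]
  refine ⟨(N, r - 1, (List.range (N + r)).map e), ?_⟩
  have hget : ∀ i, i < N + r → ((List.range (N + r)).map e).getD i (0,0) = e i := by
    intro i hi
    rw [List.getD_eq_getElem _ _ (by simpa using hi)]
    simp
  funext n
  show (if n < N + (r-1+1) then ((List.range (N+r)).map e).getD n (0,0)
      else ((List.range (N+r)).map e).getD (N + (n - N) % (r-1+1)) (0,0)) = e n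
  have hrr : r - 1 + 1 = r := by omega
  rw [hrr]
  by_cases hn : n < N + r
  · rw [if_pos hn]; exact hget n hn
  · rw [if_neg hn]
    push_neg at hn
    have hmlt : (n - N) % r < r := Nat.mod_lt _ (by omega)
    rw [hget _ (by omega)]
    have h1 : n = N + (n - N) := by omega
    conv_rhs => rw [h1, key (n - N)]

lemma range_not_countable {α : Type*} (f : (ℕ → Bool) → α) (hf : Function.Injective f) :
    ¬ (Set.range f).Countable := by
  intro h
  have hcnt : Countable (ℕ → Bool) := by
    rw [Set.countable_coe_iff.symm] at h
    exact Countable.of_equiv _ (Equiv.ofInjective f hf).symm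
  obtain ⟨g, hg⟩ := countable_iff_exists_injective (ℕ → Bool) |>.1 hcnt
  have hinj : Function.Injective (fun S : Set ℕ => (fun n => decide (n ∈ S))) := by
    intro S S' h'
    ext n
    have := congrFun h' n
    simpa [decide_eq_decide] using this
  exact Function.cantor_injective (g ∘ fun S : Set ℕ => (fun n => decide (n ∈ S)))
    (hg.comp hinj)

set_option maxHeartbeats 1600000

/-- if a rational `x ∈ [c,1]` admits two non-equivalent loops at some
`y ∈ [c,1]`, then `x` has uncountably many non-ultimately-periodic `c`-Lüroth
expansions and countably many ultimately periodic ones. -/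
theorem two_loops_uncountably_many_expansions (c : ℝ) (hc : c ∈ Set.Icc (0:ℝ) (1/2))
    (x : ℝ) (hx : x ∈ Set.Icc c 1) (hxq : ∃ q : ℚ, (q : ℝ) = x)
    (hloops : ∃ y ∈ Set.Icc c 1, ∃ (ω₁ ω₂ : ℕ → Bool) (n₁ n₂ r₁ r₂ : ℕ),
      1 ≤ r₁ ∧ 1 ≤ r₂ ∧
      -- `ω₁` realizes a loop of length `r₁` for `x` at `y` starting at time `n₁`
      Tom c ω₁ n₁ x = y ∧ Tom c ω₁ (n₁ + r₁) x = y ∧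
        (∀ j, 0 < j → j < r₁ → Tom c ω₁ (n₁ + j) x ≠ y) ∧
      -- `ω₂` realizes a loop of length `r₂` for `x` at `y` starting at time `n₂`
      Tom c ω₂ n₂ x = y ∧ Tom c ω₂ (n₂ + r₂) x = y ∧
        (∀ j, 0 < j → j < r₂ → Tom c ω₂ (n₂ + j) x ≠ y) ∧
      -- the two loops are not equivalent: their sign-digit blocks do not coincide
      ¬ (r₁ = r₂ ∧ ∀ j < r₁, expansion c ω₁ x (n₁ + j) = expansion c ω₂ x (n₂ + j))) :
    ¬ Set.Countable {e : ℕ → ℕ × ℕ |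
        (∃ ω : ℕ → Bool, expansion c ω x = e) ∧ ¬ UltimatelyPeriodic e} ∧
    Set.Countable {e : ℕ → ℕ × ℕ |
        (∃ ω : ℕ → Bool, expansion c ω x = e) ∧ UltimatelyPeriodic e} := by
  obtain ⟨hc0, hc2⟩ := hc
  obtain ⟨y, hy, ω₁, ω₂, n₁, n₂, r₁, r₂, hr1, hr2, h1a, h1b, h1c, h2a, h2b, h2c, hneq⟩ :=
    hloops
  clear hxq
  set L := r₁ * r₂ with hL
  have hr1L : r₁ ≤ L := Nat.le_mul_of_pos_right r₁ hr2
  have hr2L : r₂ ≤ L := Nat.le_mul_of_pos_left r₂ hr1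
  set bF : ℕ → Bool := fun j => ω₁ (n₁ + j % r₁) with hbF
  set bT : ℕ → Bool := fun j => ω₂ (n₂ + j % r₂) with hbT
  -- the block words agree with the shifted loop words on their loop lengths
  have hFsh : ∀ m, m ≤ r₁ → Tom c bF m y = Tom c ω₁ (n₁ + m) x := by
    intro m hm
    rw [Tom_add c ω₁ x n₁ m, h1a]
    apply Tom_congr
    intro i hi
    simp only [hbF]
    rw [Nat.mod_eq_of_lt (lt_of_lt_of_le hi hm)]
  have hTsh : ∀ m, m ≤ r₂ → Tom c bT m y = Tom c ω₂ (n₂ + m) x := by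
    intro m hm
    rw [Tom_add c ω₂ x n₂ m, h2a]
    apply Tom_congr
    intro i hi
    simp only [hbT]
    rw [Nat.mod_eq_of_lt (lt_of_lt_of_le hi hm)]
  have hy1 : Tom c bF r₁ y = y := by rw [hFsh r₁ le_rfl, h1b]
  have hy2 : Tom c bT r₂ y = y := by rw [hTsh r₂ le_rfl, h2b]
  -- periodicity of the block trajectories
  have hFper : ∀ m, Tom c bF (r₁ + m) y = Tom c bF m y := by
    intro m
    rw [Tom_add c bF y r₁ m, hy1]
    apply Tom_congr
    intro i _
    simp only [hbF, Nat.add_mod_left]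
  have hTper : ∀ m, Tom c bT (r₂ + m) y = Tom c bT m y := by
    intro m
    rw [Tom_add c bT y r₂ m, hy2]
    apply Tom_congr
    intro i _
    simp only [hbT, Nat.add_mod_left]
  have hFmul : ∀ q s, Tom c bF (q * r₁ + s) y = Tom c bF s y := by
    intro q
    induction q with
    | zero => intro s; simp
    | succ q ih =>
      intro s
      have h' : (q+1) * r₁ + s = r₁ + (q * r₁ + s) := by ring
      rw [h', hFper, ih]
  have hTmul : ∀ q s, Tom c bT (q * r₂ + s) y = Tom c bT s y := by
    intro q
    induction q with
    | zero => intro s; simp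
    | succ q ih =>
      intro s
      have h' : (q+1) * r₂ + s = r₂ + (q * r₂ + s) := by ring
      rw [h', hTper, ih]
  have hFL : Tom c bF L y = y := by
    have := hFmul r₂ 0
    rw [Nat.add_zero] at this
    rw [hL, Nat.mul_comm r₁ r₂, this]
    rfl
  have hTL2 : Tom c bT L y = y := by
    have := hTmul r₁ 0
    rw [Nat.add_zero] at this
    rw [hL, this]
    rfl
  -- the family of random paths
  set W : (ℕ → Bool) → (ℕ → Bool) := fun β k =>
    if k < n₁ then ω₁ k
    else (if β ((k - n₁) / L) then bT ((k - n₁) % L) else bF ((k - n₁) % L)) with hW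
  have hWblock : ∀ (β : ℕ → Bool) k i, i < L →
      W β (n₁ + (k * L + i)) = (if β k then bT i else bF i) := by
    intro β k i hi
    simp only [hW]
    rw [if_neg (by omega)]
    have h1 : (n₁ + (k*L+i)) - n₁ = k*L + i := by omega
    have hdiv : (k*L+i)/L = k := by
      rw [Nat.add_comm, Nat.mul_comm, Nat.add_mul_div_left _ _ (by omega : 0 < L),
        Nat.div_eq_of_lt hi, Nat.zero_add]
    have hmod : (k*L+i) % L = i := by
      rw [Nat.add_comm, Nat.mul_comm, Nat.add_mul_mod_self_left, Nat.mod_eq_of_lt hi]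
    rw [h1, hdiv, hmod]
  have hWpre : ∀ β, Tom c (W β) n₁ x = y := by
    intro β
    rw [Tom_congr c x n₁ (W β) ω₁ (fun i hi => by simp only [hW]; rw [if_pos hi])]
    exact h1a
  have hWstart : ∀ β k, Tom c (W β) (n₁ + k * L) x = y := by
    intro β k
    induction k with
    | zero => simpa using hWpre β
    | succ k ih =>
      have hstep : n₁ + (k+1)*L = (n₁ + k*L) + L := by ring
      rw [hstep, Tom_add, ih]
      have hcg : Tom c (fun i => W β ((n₁ + k*L) + i)) L y
          = Tom c (fun i => if β k then bT i else bF i) L y := by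
        apply Tom_congr
        intro i hi
        show W β ((n₁ + k*L) + i) = _
        rw [show (n₁ + k*L) + i = n₁ + (k*L + i) from by omega, hWblock β k i hi]
      rw [hcg]
      by_cases hβ : β k
      · simp only [hβ, if_true]
        exact hTL2
      · simp only [hβ, if_false]
        exact hFL
  have hWin : ∀ (β : ℕ → Bool) k i, i ≤ L →
      Tom c (W β) (n₁ + k*L + i) x = Tom c (fun j => if β k then bT j else bF j) i y := by
    intro β k i hiL
    rw [show n₁ + k*L + i = (n₁ + k*L) + i from rfl, Tom_add, hWstart β k]
    apply Tom_congr
    intro j hj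
    show W β ((n₁ + k*L) + j) = _
    rw [show (n₁ + k*L) + j = n₁ + (k*L + j) from by omega,
      hWblock β k j (lt_of_lt_of_le hj hiL)]
  set E : (ℕ → Bool) → (ℕ → ℕ × ℕ) := fun β => expansion c (W β) x with hE
  have hEblock : ∀ (β : ℕ → Bool) k i, i < L →
      E β (n₁ + k*L + i) = (if β k then expansion c bT y i else expansion c bF y i) := by
    intro β k i hi
    show expansion c (W β) x (n₁ + k*L + i) = _
    have hTom := hWin β k i (le_of_lt hi)
    have hbit : W β (n₁ + k*L + i) = (if β k then bT i else bF i) := by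
      rw [show n₁ + k*L + i = n₁ + (k*L + i) from by omega, hWblock β k i hi]
    by_cases hβ : β k
    · have hTom' : Tom c (W β) (n₁ + k*L + i) x = Tom c bT i y :=
        hTom.trans (Tom_congr c y i _ bT (fun j _ => by simp [hβ]))
      have hbit' : W β (n₁ + k*L + i) = bT i := by rw [hbit]; simp [hβ]
      rw [if_pos hβ, expansion_eq, expansion_eq, hTom', hbit']
    · have hTom' : Tom c (W β) (n₁ + k*L + i) x = Tom c bF i y :=
        hTom.trans (Tom_congr c y i _ bF (fun j _ => by simp [hβ]))
      have hbit' : W β (n₁ + k*L + i) = bF i := by rw [hbit]; simp [hβ]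
      rw [if_neg hβ, expansion_eq, expansion_eq, hTom', hbit']
  -- the two expansion blocks differ somewhere
  have hdiff : ∃ j₀, j₀ < L ∧ expansion c bF y j₀ ≠ expansion c bT y j₀ := by
    by_contra hcon
    push_neg at hcon
    have htraj : ∀ j ≤ L, Tom c bF j y = Tom c bT j y := by
      apply traj_eq hc0 hc2 hy
      intro j hj
      exact congrArg Prod.fst (hcon j hj)
    rcases Nat.lt_trichotomy r₁ r₂ with hlt | heq | hgt
    · apply h2c r₁ hr1 hlt
      rw [← hTsh r₁ (le_of_lt hlt), ← htraj r₁ hr1L, hy1]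
    · apply hneq
      refine ⟨heq, fun j hj => ?_⟩
      have e1 : expansion c ω₁ x (n₁ + j) = expansion c bF y j := by
        rw [expansion_eq, expansion_eq, hFsh j (le_of_lt hj)]
        have hbit : ω₁ (n₁ + j) = bF j := by
          simp only [hbF]; rw [Nat.mod_eq_of_lt hj]
        rw [hbit]
      have e2 : expansion c ω₂ x (n₂ + j) = expansion c bT y j := by
        rw [expansion_eq, expansion_eq, hTsh j (le_of_lt (heq ▸ hj))]
        have hbit : ω₂ (n₂ + j) = bT j := by
          simp only [hbT]; rw [Nat.mod_eq_of_lt (heq ▸ hj)]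
        rw [hbit]
      rw [e1, e2]
      exact hcon j (lt_of_lt_of_le hj hr1L)
    · apply h1c r₂ hr2 hgt
      rw [← hFsh r₂ (le_of_lt hgt), htraj r₂ hr2L, hy2]
  obtain ⟨j₀, hj₀L, hj₀⟩ := hdiff
  -- injectivity of the expansion family
  have hEinj : Function.Injective E := by
    intro β β' hee
    funext k
    have hk := congrFun hee (n₁ + k*L + j₀)
    rw [hEblock β k j₀ hj₀L, hEblock β' k j₀ hj₀L] at hk
    by_cases hβ : β k <;> by_cases hβ' : β' k
    · rw [hβ, hβ']
    · rw [if_pos hβ, if_neg hβ'] at hk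
      exact absurd hk.symm hj₀
    · rw [if_neg hβ, if_pos hβ'] at hk
      exact absurd hk hj₀
    · rw [Bool.not_eq_true] at hβ hβ'
      rw [hβ, hβ']
  constructor
  · intro hcnt
    have hsub : Set.range E ⊆
        {e : ℕ → ℕ × ℕ | (∃ ω : ℕ → Bool, expansion c ω x = e) ∧ ¬ UltimatelyPeriodic e}
          ∪ {e : ℕ → ℕ × ℕ | UltimatelyPeriodic e} := by
      rintro f ⟨β, rfl⟩
      by_cases hUP : UltimatelyPeriodic (E β)
      · right; exact hUP
      · left; exact ⟨⟨W β, rfl⟩, hUP⟩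
    exact range_not_countable E hEinj
      (Set.Countable.mono hsub (hcnt.union up_countable))
  · exact Set.Countable.mono (fun f hf => hf.2) up_countable
end
end

section
/- Let c ∈ [0,1/2] and let x ∈ [c,1] be irrational. Then for every ω ∈ {0,1}^ℕ the c-Lüroth expansion ((s_n(ω,x), d_n(ω,x)))_{n≥1} of (ω,x) is not ultimately periodic. -/
open MeasureTheory Filter Set
open scoped Classical ENNReal

noncomputable section

/-! ### Auxiliary material for the proof -/

/-- local copy of the sign function at a single point. -/
def mysgn (c : ℝ) (j : Bool) (y : ℝ) : ℕ :=
  if c = 0 then (if j then 1 else 0)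
  else if (j = false ∧ y ∈ SwitchS c) ∨
          (∃ d : ℕ, 1 ≤ d ∧ zm c d < y ∧ y < 1/(d:ℝ)) ∨
          y = 1 then 0
  else 1

lemma natcast_pred {n : ℕ} (hn : 2 ≤ n) : ((n - 1 : ℕ) : ℝ) = (n : ℝ) - 1 := by
  have h1 : 1 ≤ n := by omega
  push_cast [Nat.cast_sub h1]
  ring

lemma zm_pred_eq (c : ℝ) {n : ℕ} (hn : 2 ≤ n) :
    zm c (n - 1) = 1/((n:ℝ)-1) - c * (1/((n:ℝ)-1)) * (1/(n:ℝ)) := by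
  unfold zm
  rw [natcast_pred hn]
  ring_nf

lemma nR_facts {n : ℕ} (hn : 2 ≤ n) : (2:ℝ) ≤ (n:ℝ) ∧ (0:ℝ) < (n:ℝ) ∧ (1:ℝ) ≤ (n:ℝ) - 1 := by
  have : (2:ℝ) ≤ (n:ℝ) := by exact_mod_cast hn
  exact ⟨this, by linarith, by linarith⟩

lemma inv_le_zp {c : ℝ} (hc0 : 0 ≤ c) {n : ℕ} (hn : 2 ≤ n) : 1/(n:ℝ) ≤ zp c n := by
  obtain ⟨h2, h0, h1⟩ := nR_facts hn
  have : 0 ≤ c * (1/(n:ℝ)) * (1/((n:ℝ)-1)) := by positivity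
  unfold zp; linarith

lemma zp_lt_inv {c : ℝ} (hc0 : 0 ≤ c) (hc2 : c ≤ 1/2) {n : ℕ} (hn : 2 ≤ n) :
    zp c n < 1/((n:ℝ)-1) := by
  obtain ⟨h2, h0, h1⟩ := nR_facts hn
  have hne : (n:ℝ) ≠ 0 := by linarith
  have hne1 : (n:ℝ) - 1 ≠ 0 := by linarith
  have key : 1/((n:ℝ)-1) - zp c n = (1 - c) / ((n:ℝ) * ((n:ℝ)-1)) := by
    unfold zp; field_simp; ring
  have : 0 < (1 - c) / ((n:ℝ) * ((n:ℝ)-1)) := by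
    apply div_pos (by linarith) (by positivity)
  linarith

lemma zm_le_inv {c : ℝ} (hc0 : 0 ≤ c) {n : ℕ} (hn : 2 ≤ n) :
    zm c (n-1) ≤ 1/((n:ℝ)-1) := by
  obtain ⟨h2, h0, h1⟩ := nR_facts hn
  rw [zm_pred_eq c hn]
  have : 0 ≤ c * (1/((n:ℝ)-1)) * (1/(n:ℝ)) := by positivity
  linarith

lemma inv_le_zm {c : ℝ} (hc0 : 0 ≤ c) (hc2 : c ≤ 1/2) {n : ℕ} (hn : 2 ≤ n) :
    1/(n:ℝ) ≤ zm c (n-1) := by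
  obtain ⟨h2, h0, h1⟩ := nR_facts hn
  have hne : (n:ℝ) ≠ 0 := by linarith
  have hne1 : (n:ℝ) - 1 ≠ 0 := by linarith
  have key : zm c (n-1) - 1/(n:ℝ) = (1 - c) / ((n:ℝ) * ((n:ℝ)-1)) := by
    rw [zm_pred_eq c hn]; field_simp; ring
  have : 0 ≤ (1 - c) / ((n:ℝ) * ((n:ℝ)-1)) := by
    apply div_nonneg (by linarith) (by positivity)
  linarith

lemma zp_le_zm {c : ℝ} (hc0 : 0 ≤ c) (hc2 : c ≤ 1/2) {n : ℕ} (hn : 2 ≤ n) :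
    zp c n ≤ zm c (n-1) := by
  obtain ⟨h2, h0, h1⟩ := nR_facts hn
  have hne : (n:ℝ) ≠ 0 := by linarith
  have hne1 : (n:ℝ) - 1 ≠ 0 := by linarith
  have key : zm c (n-1) - zp c n = (1 - 2*c) / ((n:ℝ) * ((n:ℝ)-1)) := by
    rw [zm_pred_eq c hn]; unfold zp; field_simp; ring
  have : 0 ≤ (1 - 2*c) / ((n:ℝ) * ((n:ℝ)-1)) := by
    apply div_nonneg (by linarith) (by positivity)
  linarith

/-- If `1/d < y < 1/(d-1)` and `1/n ≤ y < 1/(n-1)` then `n = d`. -/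
lemma interval_unique {y : ℝ} {d n : ℕ} (hd : 2 ≤ d) (hn : 2 ≤ n)
    (h1 : 1/(d:ℝ) < y) (h2 : y < 1/((d:ℝ)-1))
    (h3 : 1/(n:ℝ) ≤ y) (h4 : y < 1/((n:ℝ)-1)) : n = d := by
  obtain ⟨hd2, hd0, hd1⟩ := nR_facts hd
  obtain ⟨hn2, hn0, hn1⟩ := nR_facts hn
  have hA : 1/(n:ℝ) < 1/((d:ℝ)-1) := lt_of_le_of_lt h3 h2
  have hB : 1/(d:ℝ) < 1/((n:ℝ)-1) := lt_trans h1 h4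
  have hA' : (d:ℝ) - 1 < (n:ℝ) := by
    rw [div_lt_div_iff₀ (by linarith : (0:ℝ) < (n:ℝ)) (by linarith : (0:ℝ) < (d:ℝ)-1)] at hA
    linarith
  have hB' : (n:ℝ) - 1 < (d:ℝ) := by
    rw [div_lt_div_iff₀ (by linarith : (0:ℝ) < (d:ℝ)) (by linarith : (0:ℝ) < (n:ℝ)-1)] at hB
    linarith
  have h5 : d < n + 1 := by exact_mod_cast (by push_cast; linarith : (d:ℝ) < ((n+1:ℕ):ℝ))
  have h6 : n < d + 1 := by exact_mod_cast (by push_cast; linarith : (n:ℝ) < ((d+1:ℕ):ℝ))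
  omega

lemma irr_ne_inv {y : ℝ} (hy : Irrational y) {n : ℕ} : y ≠ 1/(n:ℝ) := by
  intro h
  exact hy ⟨1/(n:ℚ), by push_cast; rw [h]⟩

lemma irr_ne_inv_pred {y : ℝ} (hy : Irrational y) {n : ℕ} (hn : 2 ≤ n) :
    y ≠ 1/((n:ℝ)-1) := by
  intro h
  refine hy ⟨1/((n:ℚ)-1), ?_⟩
  push_cast; rw [h]

/-- Key step lemma: one application of `Tc` on an irrational point of `[c,1)`. -/
lemma key_step (c y : ℝ) (hc0 : 0 ≤ c) (hc2 : c ≤ 1/2) (j : Bool)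
    (hy : Irrational y) (hy0 : 0 < y) (hy1 : y < 1) (hyc : c ≤ y) :
    ∃ d : ℕ, 2 ≤ d ∧ (⌈1/y⌉).toNat = d ∧
      Irrational (Tc j c y) ∧ 0 < Tc j c y ∧ Tc j c y < 1 ∧ c ≤ Tc j c y ∧
      ((mysgn c j y = 0 ∧ Tc j c y = (d:ℝ)*((d:ℝ)-1)*y - ((d:ℝ)-1)) ∨
       (mysgn c j y = 1 ∧ Tc j c y = (d:ℝ) - (d:ℝ)*((d:ℝ)-1)*y)) := by
  have hyne0 : y ≠ 0 := ne_of_gt hy0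
  have hyne1 : y ≠ 1 := ne_of_lt hy1
  -- the digit
  have hinv1 : 1 < 1/y := one_lt_one_div hy0 hy1
  have hDge : 2 ≤ ⌈1/y⌉ := by
    have : (1:ℤ) < ⌈1/y⌉ := by
      rw [Int.lt_ceil]; exact_mod_cast hinv1
    omega
  set d : ℕ := (⌈1/y⌉).toNat with hdd
  have hd2 : 2 ≤ d := by omega
  have hDcast : ((⌈1/y⌉ : ℤ) : ℝ) = (d:ℝ) := by
    rw [hdd]; exact_mod_cast (Int.toNat_of_nonneg (by omega)).symm
  obtain ⟨hdR2, hdR0, hdR1⟩ := nR_facts hd2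
  -- y strictly between 1/d and 1/(d-1)
  have hylo : 1/(d:ℝ) < y := by
    have hle : 1/y ≤ (d:ℝ) := by rw [← hDcast]; exact Int.le_ceil _
    have hne : 1/y ≠ (d:ℝ) := by
      intro h
      exact irr_ne_inv hy (by rw [← h, one_div_one_div])
    have hlt : 1/y < (d:ℝ) := lt_of_le_of_ne hle hne
    rw [div_lt_iff₀ hy0] at hlt
    rw [div_lt_iff₀ hdR0]
    linarith
  have hyhi : y < 1/((d:ℝ)-1) := by
    have : (d:ℝ) - 1 < 1/y := by
      have := Int.ceil_lt_add_one (1/y)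
      rw [hDcast] at this; linarith
    rw [lt_div_iff₀ hy0] at this
    rw [lt_div_iff₀ (by linarith : (0:ℝ) < (d:ℝ)-1)]
    linarith
  have hdy : 1 < (d:ℝ) * y := by
    rw [div_lt_iff₀ hdR0] at hylo; linarith
  have hdy1 : ((d:ℝ)-1) * y < 1 := by
    rw [lt_div_iff₀ (by linarith : (0:ℝ) < (d:ℝ)-1)] at hyhi; linarith
  -- values of TL and TA
  have hTL : TL y = (d:ℝ)*((d:ℝ)-1)*y - ((d:ℝ)-1) := by
    unfold TL
    rw [if_neg hyne0, if_neg hyne1, hDcast]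
  have hTA : TA y = (d:ℝ) - (d:ℝ)*((d:ℝ)-1)*y := by
    unfold TA; rw [hTL]; ring
  have hTL0 : 0 < TL y := by rw [hTL]; nlinarith
  have hTL1 : TL y < 1 := by rw [hTL]; nlinarith
  have hTA0 : 0 < TA y := by unfold TA; linarith
  have hTA1 : TA y < 1 := by unfold TA; linarith
  have hTLirr : Irrational (TL y) := by
    rw [hTL]
    have h1 : Irrational (((d:ℚ)*((d:ℚ)-1) : ℚ) * y) := by
      apply hy.ratCast_mul
      have : (2:ℚ) ≤ (d:ℚ) := by exact_mod_cast hd2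
      nlinarith
    have h2 : Irrational ((((d:ℚ)*((d:ℚ)-1) : ℚ) * y) + (-((d:ℚ)-1) : ℚ)) := h1.add_ratCast _
    convert h2 using 1
    push_cast; ring
  have hTAirr : Irrational (TA y) := by
    unfold TA
    have h := hTLirr.ratCast_sub (q := 1)
    rwa [Rat.cast_one] at h
  -- c-bounds
  have hTLc : zp c d ≤ y → c ≤ TL y := by
    intro h
    have hval : (d:ℝ)*((d:ℝ)-1) * zp c d = ((d:ℝ)-1) + c := by
      unfold zp; field_simp
    rw [hTL]; nlinarith
  have hTAc : y ≤ zm c (d-1) → c ≤ TA y := by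
    intro h
    have hval : (d:ℝ)*((d:ℝ)-1) * zm c (d-1) = (d:ℝ) - c := by
      rw [zm_pred_eq c hd2]; field_simp
    rw [hTA]; nlinarith
  -- unfold Tc
  have hC1 : ¬(c = 0 ∧ (y = 0 ∨ ∃ n : ℕ, 2 ≤ n ∧ y = 1/(n:ℝ))) := by
    rintro ⟨-, h | ⟨n, -, h⟩⟩
    · exact hyne0 h
    · exact irr_ne_inv hy h
  have hTc : Tc j c y =
      if (j = false ∧ ∃ n : ℕ, 2 ≤ n ∧ 1/(n:ℝ) ≤ y ∧ y < zp c n) ∨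
         (j = true ∧ ∃ n : ℕ, 2 ≤ n ∧ 1/(n:ℝ) ≤ y ∧ y ≤ zm c (n-1)) then TA y
      else TL y := by
    unfold Tc; rw [if_neg hC1, if_neg hyne1]
  -- uniqueness of witnesses
  have hUF : (∃ n : ℕ, 2 ≤ n ∧ 1/(n:ℝ) ≤ y ∧ y < zp c n) → y < zp c d := by
    rintro ⟨n, hn, h1, h2⟩
    have h4 : y < 1/((n:ℝ)-1) := lt_of_lt_of_le h2 (le_of_lt (zp_lt_inv hc0 hc2 hn))
    have := interval_unique hd2 hn hylo hyhi h1 h4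
    subst this; exact h2
  have hUT : (∃ n : ℕ, 2 ≤ n ∧ 1/(n:ℝ) ≤ y ∧ y ≤ zm c (n-1)) → y ≤ zm c (d-1) := by
    rintro ⟨n, hn, h1, h2⟩
    have h3 : y ≤ 1/((n:ℝ)-1) := le_trans h2 (zm_le_inv hc0 hn)
    have h4 : y < 1/((n:ℝ)-1) := lt_of_le_of_ne h3 (irr_ne_inv_pred hy hn)
    have := interval_unique hd2 hn hylo hyhi h1 h4
    subst this; exact h2
  have hUS : y ∈ SwitchS c → (zp c d ≤ y ∧ y ≤ zm c (d-1)) := by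
    rintro ⟨-, n, hn, h1, h2⟩
    have h1' : 1/(n:ℝ) ≤ y := le_trans (inv_le_zp hc0 hn) h1
    have h3 : y ≤ 1/((n:ℝ)-1) := le_trans h2 (zm_le_inv hc0 hn)
    have h4 : y < 1/((n:ℝ)-1) := lt_of_le_of_ne h3 (irr_ne_inv_pred hy hn)
    have := interval_unique hd2 hn hylo hyhi h1' h4
    subst this; exact ⟨h1, h2⟩
  have hUM : (∃ e : ℕ, 1 ≤ e ∧ zm c e < y ∧ y < 1/(e:ℝ)) → zm c (d-1) < y := by
    rintro ⟨e, he, h1, h2⟩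
    have hn : 2 ≤ e + 1 := by omega
    have h3 : 1/((e+1:ℕ):ℝ) ≤ y := by
      refine le_trans ?_ (le_of_lt h1)
      have := inv_le_zm hc0 hc2 hn
      simpa using this
    have h4 : y < 1/(((e+1:ℕ):ℝ)-1) := by
      push_cast; simpa using h2
    have := interval_unique hd2 hn hylo hyhi h3 h4
    have he' : e = d - 1 := by omega
    subst he'; exact h1
  -- build the middle-disjunct witness when zm c (d-1) < y
  have hMid : zm c (d-1) < y → (∃ e : ℕ, 1 ≤ e ∧ zm c e < y ∧ y < 1/(e:ℝ)) := by
    intro h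
    refine ⟨d - 1, by omega, h, ?_⟩
    rw [natcast_pred hd2]; exact hyhi
  -- main case analysis
  cases j with
  | false =>
    by_cases hpos : y < zp c d
    · -- TA branch, sign 1
      have hc0' : c ≠ 0 := by
        intro h; subst h
        have : zp 0 d = 1/(d:ℝ) := by unfold zp; ring
        rw [this] at hpos; linarith
      have hB : Tc false c y = TA y := by
        rw [hTc, if_pos]
        exact Or.inl ⟨rfl, d, hd2, le_of_lt hylo, hpos⟩
      have hle : y ≤ zm c (d-1) := le_of_lt (lt_of_lt_of_le hpos (zp_le_zm hc0 hc2 hd2))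
      have hs : mysgn c false y = 1 := by
        unfold mysgn
        rw [if_neg hc0', if_neg]
        rintro (⟨-, hS⟩ | hM | h1)
        · exact absurd ((hUS hS).1) (not_le.mpr hpos)
        · exact absurd (hUM hM) (not_lt.mpr hle)
        · exact hyne1 h1
      exact ⟨d, hd2, rfl, hB ▸ hTAirr, hB ▸ hTA0, hB ▸ hTA1, hB ▸ hTAc hle,
        Or.inr ⟨hs, by rw [hB, hTA]⟩⟩
    · -- TL branch, sign 0
      have hge : zp c d ≤ y := not_lt.mp hpos
      have hB : Tc false c y = TL y := by
        rw [hTc, if_neg]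
        rintro (⟨-, hE⟩ | ⟨h, -⟩)
        · exact hpos (hUF hE)
        · exact Bool.noConfusion h
      have hs : mysgn c false y = 0 := by
        unfold mysgn
        by_cases hc0' : c = 0
        · rw [if_pos hc0']; rfl
        · rw [if_neg hc0', if_pos]
          by_cases hle : y ≤ zm c (d-1)
          · exact Or.inl ⟨rfl, ⟨hyc, le_of_lt hy1⟩, d, hd2, hge, hle⟩
          · exact Or.inr (Or.inl (hMid (not_le.mp hle)))
      exact ⟨d, hd2, rfl, hB ▸ hTLirr, hB ▸ hTL0, hB ▸ hTL1, hB ▸ hTLc hge,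
        Or.inl ⟨hs, by rw [hB, hTL]⟩⟩
  | true =>
    by_cases hpos : y ≤ zm c (d-1)
    · -- TA branch, sign 1
      have hB : Tc true c y = TA y := by
        rw [hTc, if_pos]
        exact Or.inr ⟨rfl, d, hd2, le_of_lt hylo, hpos⟩
      have hs : mysgn c true y = 1 := by
        unfold mysgn
        by_cases hc0' : c = 0
        · rw [if_pos hc0']; rfl
        · rw [if_neg hc0', if_neg]
          rintro (⟨h, -⟩ | hM | h1)
          · exact Bool.noConfusion h
          · exact absurd (hUM hM) (not_lt.mpr hpos)
          · exact hyne1 h1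
      exact ⟨d, hd2, rfl, hB ▸ hTAirr, hB ▸ hTA0, hB ▸ hTA1, hB ▸ hTAc hpos,
        Or.inr ⟨hs, by rw [hB, hTA]⟩⟩
    · -- TL branch, sign 0
      have hlt : zm c (d-1) < y := not_le.mp hpos
      have hc0' : c ≠ 0 := by
        intro h; subst h
        have : zm 0 (d-1) = 1/((d:ℝ)-1) := by rw [zm_pred_eq 0 hd2]; ring
        rw [this] at hlt; linarith
      have hge : zp c d ≤ y := le_of_lt (lt_of_le_of_lt (zp_le_zm hc0 hc2 hd2) hlt)
      have hB : Tc true c y = TL y := by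
        rw [hTc, if_neg]
        rintro (⟨h, -⟩ | ⟨-, hE⟩)
        · exact Bool.noConfusion h
        · exact hpos (hUT hE)
      have hs : mysgn c true y = 0 := by
        unfold mysgn
        rw [if_neg hc0', if_pos]
        exact Or.inr (Or.inl (hMid hlt))
      exact ⟨d, hd2, rfl, hB ▸ hTLirr, hB ▸ hTL0, hB ▸ hTL1, hB ▸ hTLc hge,
        Or.inl ⟨hs, by rw [hB, hTL]⟩⟩

/-! ### Affine composition bookkeeping -/

def fAq (p : ℕ × ℕ) : ℚ :=
  if p.1 = 1 then -((p.2:ℚ) * ((p.2:ℚ) - 1)) else (p.2:ℚ) * ((p.2:ℚ) - 1)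

def fBq (p : ℕ × ℕ) : ℚ :=
  if p.1 = 1 then (p.2:ℚ) else -((p.2:ℚ) - 1)

def blkA (f : ℕ → ℚ) (m : ℕ) : ℕ → ℚ
  | 0 => 1
  | l+1 => f (m+l) * blkA f m l

def blkB (f g : ℕ → ℚ) (m : ℕ) : ℕ → ℚ
  | 0 => 0
  | l+1 => f (m+l) * blkB f g m l + g (m+l)

lemma blk_spec (y : ℕ → ℝ) (f g : ℕ → ℚ)
    (h : ∀ n, y (n+1) = (f n : ℝ) * y n + (g n : ℝ)) (m : ℕ) :
    ∀ l, y (m + l) = (blkA f m l : ℝ) * y m + (blkB f g m l : ℝ) := by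
  intro l
  induction l with
  | zero => simp [blkA, blkB]
  | succ l ih =>
    have : m + (l+1) = (m + l) + 1 := rfl
    rw [this, h, ih]
    simp only [blkA, blkB]
    push_cast; ring

lemma blkA_congr (f : ℕ → ℚ) (m m' : ℕ) :
    ∀ l, (∀ i, i < l → f (m+i) = f (m'+i)) → blkA f m l = blkA f m' l := by
  intro l
  induction l with
  | zero => intro _; rfl
  | succ l ih =>
    intro h
    simp only [blkA]
    rw [ih (fun i hi => h i (by omega)), h l (by omega)]

lemma blkB_congr (f g : ℕ → ℚ) (m m' : ℕ) :
    ∀ l, (∀ i, i < l → f (m+i) = f (m'+i) ∧ g (m+i) = g (m'+i)) →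
      blkB f g m l = blkB f g m' l := by
  intro l
  induction l with
  | zero => intro _; rfl
  | succ l ih =>
    intro h
    simp only [blkB]
    rw [ih (fun i hi => h i (by omega)), (h l (by omega)).1, (h l (by omega)).2]

lemma blkA_abs (f : ℕ → ℚ) (hf : ∀ n, 2 ≤ |f n|) (m : ℕ) :
    ∀ l, 2^l ≤ |blkA f m l| := by
  intro l
  induction l with
  | zero => simp [blkA]
  | succ l ih =>
    simp only [blkA, abs_mul, pow_succ]
    have h1 := hf (m+l)
    calc (2:ℚ)^l * 2 ≤ |blkA f m l| * |f (m+l)| := by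
          apply mul_le_mul ih h1 (by norm_num) (abs_nonneg _)
      _ = |f (m+l)| * |blkA f m l| := mul_comm _ _


/-- no `c`-Lüroth expansion of an irrational `x ∈ [c,1]` is ultimately
periodic. -/
theorem irrational_not_ultimately_periodic (c : ℝ) (hc : c ∈ Set.Icc (0:ℝ) (1/2))
    (x : ℝ) (hx : x ∈ Set.Icc c 1) (hxi : Irrational x) (ω : ℕ → Bool) :
    ¬ UltimatelyPeriodic (expansion c ω x) := by
  obtain ⟨hc0, hc2⟩ := hc
  obtain ⟨hxc, hx1⟩ := hx
  rintro ⟨N, r, hr, hper⟩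
  -- orbit invariants
  have horb : ∀ n, Irrational (Tom c ω n x) ∧ 0 < Tom c ω n x ∧
      Tom c ω n x < 1 ∧ c ≤ Tom c ω n x := by
    intro n
    induction n with
    | zero =>
      refine ⟨hxi, ?_, ?_, hxc⟩
      · rcases lt_or_eq_of_le (le_trans hc0 hxc) with h | h
        · exact h
        · exact absurd h.symm (by simpa using hxi.ne_int 0)
      · rcases lt_or_eq_of_le hx1 with h | h
        · exact h
        · exact absurd h (by simpa using hxi.ne_int 1)
    | succ n ih =>
      obtain ⟨hirr, h0, h1, hcc⟩ := ih
      obtain ⟨d, -, -, h⟩ := key_step c (Tom c ω n x) hc0 hc2 (ω n) hirr h0 h1 hcc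
      exact ⟨h.1, h.2.1, h.2.2.1, h.2.2.2.1⟩
  -- the one-step affine recursion
  have hrec : ∀ n, Tom c ω (n+1) x =
      (fAq (expansion c ω x n) : ℝ) * Tom c ω n x + (fBq (expansion c ω x n) : ℝ) := by
    intro n
    obtain ⟨hirr, h0, h1, hcc⟩ := horb n
    obtain ⟨d, hd2, hdig, -, -, -, -, hbr⟩ :=
      key_step c (Tom c ω n x) hc0 hc2 (ω n) hirr h0 h1 hcc
    have hdval : dig c ω x n = d := by
      unfold dig; rw [if_neg (ne_of_lt h1)]; exact hdig
    have hsval : sgn c ω x n = mysgn c (ω n) (Tom c ω n x) := rfl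
    have hT : Tom c ω (n+1) x = Tc (ω n) c (Tom c ω n x) := rfl
    have hd2R : (2:ℝ) ≤ (d:ℝ) := by exact_mod_cast hd2
    rcases hbr with ⟨hs, hval⟩ | ⟨hs, hval⟩
    · have he : expansion c ω x n = (0, d) := by
        unfold expansion; rw [hdval, hsval, hs]
      rw [hT, hval, he]
      unfold fAq fBq
      norm_num
      push_cast; ring
    · have he : expansion c ω x n = (1, d) := by
        unfold expansion; rw [hdval, hsval, hs]
      rw [hT, hval, he]
      unfold fAq fBq
      norm_num
      push_cast; ring
  have hdig2 : ∀ n, 2 ≤ dig c ω x n := by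
    intro n
    obtain ⟨hirr, h0, h1, hcc⟩ := horb n
    obtain ⟨d, hd2, hdig, -⟩ := key_step c (Tom c ω n x) hc0 hc2 (ω n) hirr h0 h1 hcc
    have : dig c ω x n = d := by unfold dig; rw [if_neg (ne_of_lt h1)]; exact hdig
    omega
  set f : ℕ → ℚ := fun n => fAq (expansion c ω x n) with hf
  set g : ℕ → ℚ := fun n => fBq (expansion c ω x n) with hg
  have hfabs : ∀ n, 2 ≤ |f n| := by
    intro n
    have hd := hdig2 n
    have hdQ : (2:ℚ) ≤ ((dig c ω x n : ℕ):ℚ) := by exact_mod_cast hd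
    have he2 : (expansion c ω x n).2 = dig c ω x n := rfl
    rw [hf]
    simp only
    unfold fAq
    rw [he2]
    split
    · rw [abs_neg, abs_of_nonneg (by nlinarith)]; nlinarith
    · rw [abs_of_nonneg (by nlinarith)]; nlinarith
  -- periodicity transported along multiples of r
  have hmult : ∀ k n, N ≤ n → expansion c ω x (n + k*r) = expansion c ω x n := by
    intro k
    induction k with
    | zero => intro n _; simp
    | succ k ih =>
      intro n hn
      have : n + (k+1)*r = (n + k*r) + r := by ring
      rw [this, hper _ (by omega), ih n hn]
  -- the period-block affine map
  set A : ℚ := blkA f N r with hA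
  set B : ℚ := blkB f g N r with hB
  set Y : ℕ → ℝ := fun k => Tom c ω (N + k*r) x with hY
  have hYrec : ∀ k, Y (k+1) = (A:ℝ) * Y k + (B:ℝ) := by
    intro k
    have h1 : N + (k+1)*r = (N + k*r) + r := by ring
    have h2 := blk_spec (fun n => Tom c ω n x) f g hrec (N + k*r) r
    have hcongr : ∀ i, i < r → f (N + k*r + i) = f (N + i) ∧ g (N + k*r + i) = g (N + i) := by
      intro i hi
      have hidx : N + k*r + i = (N + i) + k*r := by ring
      constructor
      · rw [hf]; simp only; rw [hidx, hmult k (N+i) (by omega)]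
      · rw [hg]; simp only; rw [hidx, hmult k (N+i) (by omega)]
    have hAc : blkA f (N + k*r) r = A := blkA_congr f (N + k*r) N r (fun i hi => (hcongr i hi).1)
    have hBc : blkB f g (N + k*r) r = B := blkB_congr f g (N + k*r) N r hcongr
    calc Y (k+1) = Tom c ω ((N + k*r) + r) x := by rw [hY]; simp only; rw [h1]
      _ = (blkA f (N + k*r) r : ℝ) * Tom c ω (N + k*r) x + (blkB f g (N + k*r) r : ℝ) := h2
      _ = (A:ℝ) * Y k + (B:ℝ) := by rw [hAc, hBc]
  have hAabs : 2 ≤ |A| := by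
    calc (2:ℚ) = 2^1 := by norm_num
      _ ≤ 2^r := by apply pow_le_pow_right₀ (by norm_num) hr
      _ ≤ |A| := blkA_abs f hfabs N r
  have hYmem : ∀ k, 0 < Y k ∧ Y k < 1 := fun k => ⟨(horb _).2.1, (horb _).2.2.1⟩
  have hdiffeq : ∀ k, Y (k+1) - Y k = (A:ℝ)^k * (Y 1 - Y 0) := by
    intro k
    induction k with
    | zero => simp
    | succ k ih =>
      have h1 := hYrec (k+1)
      have h2 := hYrec k
      have : Y (k+2) - Y (k+1) = (A:ℝ) * (Y (k+1) - Y k) := by rw [h1, h2]; ring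
      rw [this, ih, pow_succ]; ring
  have hY10 : Y 1 = Y 0 := by
    by_contra hne
    have hε : 0 < |Y 1 - Y 0| := abs_pos.mpr (sub_ne_zero.mpr hne)
    obtain ⟨k, hk⟩ := pow_unbounded_of_one_lt (1/|Y 1 - Y 0|) (by norm_num : (1:ℝ) < 2)
    have hAR : (2:ℝ) ≤ |(A:ℝ)| := by
      rw [← Rat.cast_abs]; exact_mod_cast hAabs
    have hpow : (2:ℝ)^k ≤ |(A:ℝ)|^k := pow_le_pow_left₀ (by norm_num) hAR k
    have hlt1 : |Y (k+1) - Y k| < 1 := by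
      obtain ⟨a0, a1⟩ := hYmem (k+1)
      obtain ⟨b0, b1⟩ := hYmem k
      rw [abs_lt]; constructor <;> linarith
    rw [hdiffeq k, abs_mul, abs_pow] at hlt1
    have h1 : 1 < (2:ℝ)^k * |Y 1 - Y 0| := by
      rw [div_lt_iff₀ hε] at hk; linarith
    have h2 : (2:ℝ)^k * |Y 1 - Y 0| ≤ |(A:ℝ)|^k * |Y 1 - Y 0| :=
      mul_le_mul_of_nonneg_right hpow (abs_nonneg _)
    linarith
  -- Y 0 is a rational number, contradiction
  have hA1 : (A:ℝ) ≠ 1 := by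
    intro h
    have : A = 1 := by exact_mod_cast h
    rw [this] at hAabs; norm_num at hAabs
  have heq : (A:ℝ) * Y 0 + (B:ℝ) = Y 0 := by rw [← hYrec 0, hY10]
  have hYval : Y 0 = ((B / (1 - A) : ℚ) : ℝ) := by
    have hne : (1:ℝ) - (A:ℝ) ≠ 0 := fun h => hA1 (by linarith)
    have hne' : (1:ℚ) - A ≠ 0 := by
      intro h; apply hne; exact_mod_cast congrArg (Rat.cast (K := ℝ)) h
    rw [Rat.cast_div, Rat.cast_sub, Rat.cast_one, eq_div_iff hne]
    linear_combination -heq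
  exact (horb (N + 0*r)).1 ⟨B / (1 - A), hYval.symm⟩
end
end

section
/- For every 0 < p < 1, the product measure m_p × λ on {0,1}^ℕ × [0,1] is an invariant probability measure for the random 0-Lüroth transformation L_0 (i.e. L_0 is measure preserving with respect to m_p × λ), and L_0 is ergodic with respect to m_p × λ. -/
open MeasureTheory Filter Set
open scoped Classical ENNReal

noncomputable section

namespace L0Aux

/-- tail/shift of a sequence -/
def tl {α : Type*} (f : ℕ → α) : ℕ → α := fun n => f (n+1)

/-- prefix cylinder -/
def pc (n : ℕ) (f : ℕ → Bool) : Set (ℕ → Bool) := {ω | ∀ i, i < n → ω i = f i}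

/-- branch interval corresponding to digit `k+2` -/
def Ik (k : ℕ) : Set ℝ := Set.Ioo (1/((k:ℝ)+2)) (1/((k:ℝ)+1))

/-- slope of the branch -/
def sl (k : ℕ) : ℝ := ((k:ℝ)+2) * ((k:ℝ)+1)

/-- the affine branch map -/
def phi (j : Bool) (k : ℕ) (x : ℝ) : ℝ :=
  if j then ((k:ℝ)+2) - sl k * x else sl k * x - ((k:ℝ)+1)

lemma sl_pos (k : ℕ) : 0 < sl k := by
  have : (0:ℝ) ≤ (k:ℝ) := Nat.cast_nonneg k
  unfold sl; nlinarith

lemma two_le_sl (k : ℕ) : 2 ≤ sl k := by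
  have : (0:ℝ) ≤ (k:ℝ) := Nat.cast_nonneg k
  unfold sl; nlinarith

lemma Ik_subset (k : ℕ) : Ik k ⊆ Set.Ioo (0:ℝ) 1 := by
  intro x hx
  have hk : (0:ℝ) ≤ (k:ℝ) := Nat.cast_nonneg k
  have h1 : (0:ℝ) < (k:ℝ)+2 := by linarith
  have h2 : (0:ℝ) < (k:ℝ)+1 := by linarith
  obtain ⟨ha, hb⟩ := hx
  constructor
  · have : (0:ℝ) < 1/((k:ℝ)+2) := by positivity
    linarith
  · have : 1/((k:ℝ)+1) ≤ 1 := by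
      rw [div_le_one h2]; linarith
    linarith

lemma Ik_disjoint_aux {k l : ℕ} (h : k < l) {x : ℝ} (hx : x ∈ Ik k) (hy : x ∈ Ik l) : False := by
  have hk : (0:ℝ) < (k:ℝ)+1 := by positivity
  have hl : (0:ℝ) < (l:ℝ)+1 := by positivity
  have hcast : (k:ℝ)+2 ≤ (l:ℝ)+1 := by
    have : (k:ℕ)+2 ≤ l+1 := by omega
    exact_mod_cast this
  have h1 : 1/((l:ℝ)+1) ≤ 1/((k:ℝ)+2) := by
    apply one_div_le_one_div_of_le (by positivity) hcast
  obtain ⟨ha, hb⟩ := hx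
  obtain ⟨hc, hd⟩ := hy
  linarith

lemma Ik_inj {k l : ℕ} {x : ℝ} (hx : x ∈ Ik k) (hy : x ∈ Ik l) : k = l := by
  rcases lt_trichotomy k l with h | h | h
  · exact absurd (Ik_disjoint_aux h hx hy) (by simp)
  · exact h
  · exact absurd (Ik_disjoint_aux h hy hx) (by simp)

lemma phi_preimage_Ioo (j : Bool) (k : ℕ) (u v : ℝ) :
    phi j k ⁻¹' Set.Ioo u v =
      if j then Set.Ioo ((((k:ℝ)+2) - v)/sl k) ((((k:ℝ)+2) - u)/sl k)
      else Set.Ioo ((u + ((k:ℝ)+1))/sl k) ((v + ((k:ℝ)+1))/sl k) := by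
  have hs : 0 < sl k := sl_pos k
  cases j <;> ext x <;>
    simp only [Set.mem_preimage, Set.mem_Ioo, phi, if_true, if_false, Bool.false_eq_true,
      Bool.true_eq_false] <;>
    rw [div_lt_iff₀ hs, lt_div_iff₀ hs] <;>
    constructor <;> rintro ⟨h1, h2⟩ <;> constructor <;> nlinarith

lemma phi_preimage_Ioo01 (j : Bool) (k : ℕ) : phi j k ⁻¹' Set.Ioo 0 1 = Ik k := by
  rw [phi_preimage_Ioo]
  have hs : 0 < sl k := sl_pos k
  have h1 : (0:ℝ) < (k:ℝ)+1 := by positivity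
  have h2 : (0:ℝ) < (k:ℝ)+2 := by positivity
  have h1' : ((k:ℝ)+1) ≠ 0 := ne_of_gt h1
  have h2' : ((k:ℝ)+2) ≠ 0 := ne_of_gt h2
  have hs' : sl k ≠ 0 := ne_of_gt hs
  cases j
  · simp only [Bool.false_eq_true, if_false]
    unfold Ik
    rw [show (0 + ((k:ℝ)+1))/sl k = 1/((k:ℝ)+2) by
          rw [div_eq_div_iff hs' h2']; unfold sl; ring,
        show (1 + ((k:ℝ)+1))/sl k = 1/((k:ℝ)+1) by
          rw [div_eq_div_iff hs' h1']; unfold sl; ring]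
  · simp only [if_true]
    unfold Ik
    rw [show (((k:ℝ)+2) - 1)/sl k = 1/((k:ℝ)+2) by
          rw [div_eq_div_iff hs' h2']; unfold sl; ring,
        show (((k:ℝ)+2) - 0)/sl k = 1/((k:ℝ)+1) by
          rw [div_eq_div_iff hs' h1']; unfold sl; ring]

lemma mem_Ik_iff {k : ℕ} {x : ℝ} : x ∈ Ik k ↔ 1/((k:ℝ)+2) < x ∧ x < 1/((k:ℝ)+1) := Iff.rfl

lemma TL_on_Ik {k : ℕ} {x : ℝ} (hx : x ∈ Ik k) : TL x = sl k * x - ((k:ℝ)+1) := by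
  obtain ⟨ha, hb⟩ := hx
  have h1 : (0:ℝ) < (k:ℝ)+1 := by positivity
  have h2 : (0:ℝ) < (k:ℝ)+2 := by positivity
  have hxpos : 0 < x := lt_trans (by positivity) ha
  have hx1 : x < 1 := by
    have : 1/((k:ℝ)+1) ≤ 1 := by rw [div_le_one h1]; linarith
    linarith
  have hr1 : ((k:ℝ)+1) < 1/x := by
    rw [lt_div_iff₀ hxpos]
    have := (lt_div_iff₀ h1).mp hb
    linarith
  have hr2 : 1/x < (k:ℝ)+2 := by
    rw [div_lt_iff₀ hxpos]
    have := (div_lt_iff₀ h2).mp ha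
    linarith
  have hceil : ⌈1/x⌉ = (k:ℤ)+2 := by
    rw [Int.ceil_eq_iff]
    constructor
    · push_cast; linarith
    · push_cast; linarith
  unfold TL
  rw [if_neg (by exact ne_of_gt hxpos), if_neg (by exact ne_of_lt hx1), hceil]
  push_cast
  unfold sl
  ring

lemma x_ne_unit_frac {k : ℕ} {x : ℝ} (hx : x ∈ Ik k) :
    ¬ (x = 0 ∨ ∃ n : ℕ, 2 ≤ n ∧ x = 1/(n:ℝ)) := by
  obtain ⟨ha, hb⟩ := hx
  have h1 : (0:ℝ) < (k:ℝ)+1 := by positivity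
  have h2 : (0:ℝ) < (k:ℝ)+2 := by positivity
  have hxpos : 0 < x := lt_trans (by positivity) ha
  rintro (rfl | ⟨n, hn2, rfl⟩)
  · exact lt_irrefl 0 hxpos
  · have hn : (0:ℝ) < (n:ℝ) := by positivity
    have hnk1 : (n:ℝ) < (k:ℝ)+2 := by
      have := (div_lt_div_iff₀ h2 hn).mp ha
      linarith
    have hnk2 : (k:ℝ)+1 < (n:ℝ) := by
      have := (div_lt_div_iff₀ hn h1).mp hb
      linarith
    have e1 : n < k+2 := by exact_mod_cast hnk1
    have e2 : k+1 < n := by exact_mod_cast hnk2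
    omega

lemma x_ne_one {k : ℕ} {x : ℝ} (hx : x ∈ Ik k) : x ≠ 1 :=
  ne_of_lt ((Ik_subset k hx).2)

lemma Tc_on_Ik (j : Bool) {k : ℕ} {x : ℝ} (hx : x ∈ Ik k) : Tc j 0 x = phi j k x := by
  have hTL := TL_on_Ik hx
  have hsub := Ik_subset k hx
  unfold Tc
  rw [if_neg (by
    rintro ⟨-, h⟩
    exact x_ne_unit_frac hx h)]
  rw [if_neg (x_ne_one hx)]
  cases j
  · rw [if_neg (by
      rintro (⟨-, n, hn2, hn3, hn4⟩ | ⟨h, -⟩)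
      · have : zp 0 n = 1/(n:ℝ) := by unfold zp; ring
        rw [this] at hn4
        exact absurd hn3 (not_le.mpr hn4)
      · simp at h)]
    rw [hTL]; simp [phi]
  · rw [if_pos (by
      right
      refine ⟨rfl, k+2, by omega, ?_, ?_⟩
      · exact_mod_cast le_of_lt hx.1
      · have : (k+2) - 1 = k+1 := by omega
        rw [this]
        have : zm 0 (k+1) = 1/((k:ℝ)+1) := by unfold zm; push_cast; ring
        rw [this]
        exact le_of_lt hx.2)]
    unfold TA
    rw [hTL]; simp only [phi, if_true]; ring

/-- fundamental intervals of the random Lüroth map -/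
def Del : ℕ → (ℕ → Bool) → (ℕ → ℕ) → Set ℝ
  | 0, _, _ => Set.Ioo 0 1
  | n+1, f, d => Ik (d 0) ∩ (Tc (f 0) 0)⁻¹' (Del n (tl f) (tl d))

/-- cylinders in the product space -/
def Cyl (n : ℕ) (f : ℕ → Bool) (d : ℕ → ℕ) : Set ((ℕ → Bool) × ℝ) :=
  pc n f ×ˢ Del n f d

lemma measurable_TL : Measurable TL := by
  have hinv : Measurable fun x : ℝ => 1/x := by
    simpa only [one_div] using measurable_inv
  have hc : Measurable fun x : ℝ => ((⌈1/x⌉ : ℤ) : ℝ) :=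
    (measurable_from_top : Measurable (Int.cast : ℤ → ℝ)).comp (Int.measurable_ceil.comp hinv)
  unfold TL
  apply Measurable.ite (measurableSet_eq) measurable_const
  apply Measurable.ite (measurableSet_eq) measurable_const
  exact ((hc.mul (hc.sub measurable_const)).mul measurable_id).sub (hc.sub measurable_const)

lemma measurable_TA : Measurable TA := measurable_const.sub measurable_TL

lemma measurable_Tc (j : Bool) : Measurable (Tc j 0) := by
  have hS1 : MeasurableSet {x : ℝ | (0:ℝ) = 0 ∧ (x = 0 ∨ ∃ n : ℕ, 2 ≤ n ∧ x = 1/(n:ℝ))} := by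
    have hsub : {x : ℝ | (0:ℝ) = 0 ∧ (x = 0 ∨ ∃ n : ℕ, 2 ≤ n ∧ x = 1/(n:ℝ))} ⊆
        {0} ∪ Set.range (fun n : ℕ => 1/(n:ℝ)) := by
      rintro x ⟨-, (rfl | ⟨n, -, rfl⟩)⟩
      · exact Or.inl rfl
      · exact Or.inr ⟨n, rfl⟩
    exact (Set.Countable.mono hsub
      ((Set.countable_singleton 0).union (Set.countable_range _))).measurableSet
  have e1 : ∀ (P : Prop) (g : ℕ → Set ℝ), (∀ n, MeasurableSet (g n)) →
      MeasurableSet {x : ℝ | P ∧ ∃ n : ℕ, x ∈ g n} := by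
    intro P g hg
    by_cases hP : P
    · simp only [hP, true_and]
      rw [show {x : ℝ | ∃ n : ℕ, x ∈ g n} = ⋃ n, g n by ext x; simp]
      exact MeasurableSet.iUnion hg
    · simp [hP]
  have hS3 : MeasurableSet {x : ℝ |
      (j = false ∧ ∃ n : ℕ, 2 ≤ n ∧ 1/(n:ℝ) ≤ x ∧ x < zp 0 n) ∨
      (j = true ∧ ∃ n : ℕ, 2 ≤ n ∧ 1/(n:ℝ) ≤ x ∧ x ≤ zm 0 (n-1))} := by
    apply MeasurableSet.union
    · have heq : {x : ℝ | j = false ∧ ∃ n : ℕ, 2 ≤ n ∧ 1/(n:ℝ) ≤ x ∧ x < zp 0 n} =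
          {x : ℝ | j = false ∧ ∃ n : ℕ,
            x ∈ (fun n : ℕ => if 2 ≤ n then Set.Ico (1/(n:ℝ)) (zp 0 n) else ∅) n} := by
        ext x
        simp only [Set.mem_setOf_eq]
        apply and_congr_right
        intro _
        constructor
        · rintro ⟨n, h2, h3, h4⟩
          exact ⟨n, by simp only [h2, if_true]; exact ⟨h3, h4⟩⟩
        · rintro ⟨n, hn⟩
          by_cases h2 : 2 ≤ n
          · simp only [h2, if_true] at hn; exact ⟨n, h2, hn.1, hn.2⟩
          · simp [h2] at hn
      show MeasurableSet {x : ℝ | j = false ∧ ∃ n : ℕ, 2 ≤ n ∧ 1/(n:ℝ) ≤ x ∧ x < zp 0 n}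
      rw [heq]
      exact e1 _ _ (fun n => by by_cases h : 2 ≤ n <;> simp [h, measurableSet_Ico])
    · have heq : {x : ℝ | j = true ∧ ∃ n : ℕ, 2 ≤ n ∧ 1/(n:ℝ) ≤ x ∧ x ≤ zm 0 (n-1)} =
          {x : ℝ | j = true ∧ ∃ n : ℕ,
            x ∈ (fun n : ℕ => if 2 ≤ n then Set.Icc (1/(n:ℝ)) (zm 0 (n-1)) else ∅) n} := by
        ext x
        simp only [Set.mem_setOf_eq]
        apply and_congr_right
        intro _
        constructor
        · rintro ⟨n, h2, h3, h4⟩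
          exact ⟨n, by simp only [h2, if_true]; exact ⟨h3, h4⟩⟩
        · rintro ⟨n, hn⟩
          by_cases h2 : 2 ≤ n
          · simp only [h2, if_true] at hn; exact ⟨n, h2, hn.1, hn.2⟩
          · simp [h2] at hn
      show MeasurableSet {x : ℝ | j = true ∧ ∃ n : ℕ, 2 ≤ n ∧ 1/(n:ℝ) ≤ x ∧ x ≤ zm 0 (n-1)}
      rw [heq]
      exact e1 _ _ (fun n => by by_cases h : 2 ≤ n <;> simp [h, measurableSet_Icc])
  unfold Tc
  apply Measurable.ite hS1 measurable_const
  apply Measurable.ite (measurableSet_eq) measurable_const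
  exact Measurable.ite hS3 measurable_TA measurable_TL

lemma measurable_tl : Measurable (tl : (ℕ → Bool) → (ℕ → Bool)) :=
  measurable_pi_lambda _ fun i => measurable_pi_apply (i+1)

lemma measurable_L0 : Measurable L0 := by
  apply Measurable.prod
  · exact measurable_tl.comp measurable_fst
  · have : (fun q : (ℕ → Bool) × ℝ => Tc (q.1 0) 0 q.2) =
        fun q => if q.1 0 = false then Tc false 0 q.2 else Tc true 0 q.2 := by
      funext q
      rcases Bool.dichotomy (q.1 0) with h | h <;> simp [h]
    show Measurable fun q : (ℕ → Bool) × ℝ => Tc (q.1 0) 0 q.2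
    rw [this]
    apply Measurable.ite
    · show MeasurableSet ((fun q : (ℕ → Bool) × ℝ => q.1 0)⁻¹' {false})
      exact ((measurable_pi_apply 0).comp measurable_fst) (measurableSet_singleton false)
    · exact (measurable_Tc false).comp measurable_snd
    · exact (measurable_Tc true).comp measurable_snd

lemma measurable_pc (n : ℕ) (f : ℕ → Bool) : MeasurableSet (pc n f) := by
  have : pc n f = ⋂ i, {ω : ℕ → Bool | i < n → ω i = f i} := by
    ext ω; simp [pc]
  rw [this]
  apply MeasurableSet.iInter
  intro i
  by_cases h : i < n
  · simp only [h, forall_true_left]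
    show MeasurableSet ((fun ω : ℕ → Bool => ω i)⁻¹' {f i})
    exact (measurable_pi_apply i) (measurableSet_singleton (f i))
  · simp [h]

lemma measurable_Del (n : ℕ) (f : ℕ → Bool) (d : ℕ → ℕ) : MeasurableSet (Del n f d) := by
  induction n generalizing f d with
  | zero => exact measurableSet_Ioo
  | succ n ih => exact measurableSet_Ioo.inter ((measurable_Tc (f 0)) (ih (tl f) (tl d)))

lemma measurable_Cyl (n : ℕ) (f : ℕ → Bool) (d : ℕ → ℕ) : MeasurableSet (Cyl n f d) :=
  (measurable_pc n f).prod (measurable_Del n f d)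

lemma Del_congr {n : ℕ} {f f' : ℕ → Bool} {d d' : ℕ → ℕ}
    (hf : ∀ i, i < n → f i = f' i) (hd : ∀ i, i < n → d i = d' i) :
    Del n f d = Del n f' d' := by
  induction n generalizing f f' d d' with
  | zero => rfl
  | succ n ih =>
    show Ik (d 0) ∩ _ = Ik (d' 0) ∩ _
    have hih := ih (f := tl f) (f' := tl f') (d := tl d) (d' := tl d')
      (fun i hi => hf (i+1) (by omega)) (fun i hi => hd (i+1) (by omega))
    rw [hd 0 (by omega), hf 0 (by omega), hih]

lemma Del_subset_Ioo (n : ℕ) (f : ℕ → Bool) (d : ℕ → ℕ) : Del n f d ⊆ Set.Ioo 0 1 := by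
  cases n with
  | zero => exact subset_rfl
  | succ n => exact fun x hx => Ik_subset _ hx.1

lemma DelStruct (n : ℕ) (f : ℕ → Bool) (d : ℕ → ℕ) :
    ∃ u v : ℝ, 0 ≤ u ∧ v ≤ 1 ∧ v - u ≤ (1/2)^n ∧ Del n f d = Set.Ioo u v := by
  induction n generalizing f d with
  | zero => exact ⟨0, 1, le_refl 0, le_refl 1, by norm_num, rfl⟩
  | succ n ih =>
    obtain ⟨u, v, hu0, hv1, hlen, hEq⟩ := ih (tl f) (tl d)
    set k := d 0 with hk
    have hs : 0 < sl k := sl_pos k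
    have hs2 : 2 ≤ sl k := two_le_sl k
    have hkr : (0:ℝ) ≤ (k:ℝ) := Nat.cast_nonneg k
    have hpre : Del (n+1) f d = phi (f 0) k ⁻¹' Set.Ioo u v := by
      show Ik (d 0) ∩ (Tc (f 0) 0)⁻¹' (Del n (tl f) (tl d)) = _
      rw [hEq, ← hk]
      have h1 : Ik k ∩ (Tc (f 0) 0)⁻¹' (Set.Ioo u v)
          = Ik k ∩ (phi (f 0) k)⁻¹' (Set.Ioo u v) := by
        ext x
        simp only [Set.mem_inter_iff, Set.mem_preimage, and_congr_right_iff]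
        intro hx
        rw [Tc_on_Ik (f 0) hx]
      rw [h1]
      apply Set.inter_eq_self_of_subset_right
      rw [← phi_preimage_Ioo01 (f 0) k]
      exact Set.preimage_mono (Set.Ioo_subset_Ioo hu0 hv1)
    rw [hpre, phi_preimage_Ioo]
    have hhalf : ∀ a b : ℝ, b - a = (v-u)/sl k → 0 ≤ (1/2:ℝ)^n → b - a ≤ (1/2)^(n+1) := by
      intro a b hba hp
      rw [hba]
      rcases le_or_gt (v-u) 0 with h | h
      · calc (v-u)/sl k ≤ 0 := div_nonpos_of_nonpos_of_nonneg h (le_of_lt hs)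
          _ ≤ (1/2)^(n+1) := by positivity
      · calc (v-u)/sl k ≤ (1/2)^n/2 := div_le_div₀ hp hlen (by norm_num) hs2
          _ = (1/2)^(n+1) := by rw [pow_succ]; ring
    cases hj : f 0
    · simp only [Bool.false_eq_true, if_false]
      refine ⟨(u + ((k:ℝ)+1))/sl k, (v + ((k:ℝ)+1))/sl k,
        div_nonneg (by linarith) (le_of_lt hs), ?_, ?_, rfl⟩
      · rw [div_le_one hs]
        unfold sl; nlinarith
      · apply hhalf _ _ _ (by positivity)
        rw [div_sub_div_same]; ring_nf
    · simp only [if_true]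
      refine ⟨(((k:ℝ)+2) - v)/sl k, (((k:ℝ)+2) - u)/sl k,
        div_nonneg (by linarith) (le_of_lt hs), ?_, ?_, rfl⟩
      · rw [div_le_one hs]
        unfold sl; nlinarith
      · apply hhalf _ _ _ (by positivity)
        rw [div_sub_div_same]; ring_nf

/-- weight of a symbol -/
def wt (p : ℝ) : Bool → ℝ≥0∞ := fun j => ENNReal.ofReal (if j then 1-p else p)

/-- prepend a symbol -/
def cons {α : Type*} (a : α) (f : ℕ → α) : ℕ → α := fun i => match i with
  | 0 => a
  | Nat.succ t => f t

lemma pc_zero (f : ℕ → Bool) : pc 0 f = Set.univ := by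
  ext ω; simp [pc]

/-- the collection of prefix cylinders -/
def pcC : Set (Set (ℕ → Bool)) := {s | ∃ n f, s = pc n f}

lemma pc_subset {n k : ℕ} {f g : ℕ → Bool} (hnk : n ≤ k)
    (hne : (pc n f ∩ pc k g).Nonempty) : pc k g ⊆ pc n f := by
  obtain ⟨ω, hω1, hω2⟩ := hne
  intro ω' h i hi
  rw [h i (by omega), ← hω2 i (by omega), hω1 i hi]

lemma isPiSystem_pcC : IsPiSystem pcC := by
  rintro s ⟨n, f, rfl⟩ t ⟨k, g, rfl⟩ hne
  rcases le_total n k with h | h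
  · rw [Set.inter_eq_right.mpr (pc_subset h hne)]
    exact ⟨k, g, rfl⟩
  · rw [Set.inter_eq_left.mpr (pc_subset h (by rwa [Set.inter_comm] at hne))]
    exact ⟨n, f, rfl⟩

lemma gen_pc : (inferInstance : MeasurableSpace (ℕ → Bool)) = .generateFrom pcC := by
  apply le_antisymm
  · have hid : @Measurable _ _ (.generateFrom pcC) (inferInstance) (id : (ℕ → Bool) → (ℕ → Bool)) := by
      rw [@measurable_pi_iff _ _ _ (.generateFrom pcC)]
      intro i
      apply @measurable_to_countable' _ _ _ _ (.generateFrom pcC)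
      intro b
      have hset : (fun ω : ℕ → Bool => ω i)⁻¹' {b} =
          ⋃ (v : {v : Fin (i+1) → Bool // v ⟨i, Nat.lt_succ_self i⟩ = b}),
            pc (i+1) (fun t => if h : t < i+1 then v.1 ⟨t, h⟩ else false) := by
        ext ω
        simp only [Set.mem_preimage, Set.mem_singleton_iff, Set.mem_iUnion]
        constructor
        · intro hω
          refine ⟨⟨fun t => ω t, hω⟩, fun t ht => ?_⟩
          simp [ht]
        · rintro ⟨v, hv⟩
          have := hv i (Nat.lt_succ_self i)
          simp only [Nat.lt_succ_self, dif_pos] at this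
          rw [this, v.2]
      show MeasurableSet[MeasurableSpace.generateFrom pcC] ((fun ω : ℕ → Bool => ω i)⁻¹' {b})
      rw [hset]
      exact MeasurableSet.iUnion fun v =>
        MeasurableSpace.measurableSet_generateFrom ⟨i+1, _, rfl⟩
    intro s hs
    exact hid hs
  · exact MeasurableSpace.generateFrom_le (by rintro s ⟨n, f, rfl⟩; exact measurable_pc n f)

section Bernoulli

variable {p : ℝ} {m : Measure (ℕ → Bool)}

lemma m_pc (hm : IsBernoulli p m) (n : ℕ) (f : ℕ → Bool) :
    m (pc n f) = ∏ i ∈ Finset.range n, wt p (f i) := by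
  have h1 : pc n f = {ω : ℕ → Bool | ∀ i : Fin n, ω i = f i} := by
    ext ω
    simp only [pc, Set.mem_setOf_eq]
    constructor
    · intro h i; exact h i i.2
    · intro h i hi; exact h ⟨i, hi⟩
  rw [h1, hm.2 n (fun i => f i), ← Fin.prod_univ_eq_prod_range]
  rfl

lemma ext_pc {μ1 μ2 : Measure (ℕ → Bool)} [IsFiniteMeasure μ1]
    (h : ∀ n f, μ1 (pc n f) = μ2 (pc n f)) : μ1 = μ2 := by
  apply MeasureTheory.ext_of_generate_finite pcC gen_pc isPiSystem_pcC
  · rintro s ⟨n, f, rfl⟩; exact h n f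
  · have := h 0 (fun _ => false)
    rwa [pc_zero] at this

lemma m_pc1 (hm : IsBernoulli p m) (j : Bool) : m (pc 1 (fun _ => j)) = wt p j := by
  rw [m_pc hm]
  simp

lemma map_tl (hm : IsBernoulli p m) (j : Bool) :
    Measure.map tl (m.restrict (pc 1 (fun _ => j))) = wt p j • m := by
  haveI := hm.1
  haveI : IsFiniteMeasure (Measure.map tl (m.restrict (pc 1 (fun _ => j)))) := by
    constructor
    rw [Measure.map_apply measurable_tl MeasurableSet.univ]
    exact measure_lt_top _ _
  apply ext_pc
  intro n f
  rw [Measure.map_apply measurable_tl (measurable_pc n f),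
    Measure.restrict_apply (measurable_tl (measurable_pc n f))]
  have hset : tl⁻¹' (pc n f) ∩ pc 1 (fun _ => j) = pc (n+1) (cons j f) := by
    ext ω
    simp only [Set.mem_inter_iff, Set.mem_preimage, pc, Set.mem_setOf_eq]
    constructor
    · rintro ⟨h1, h2⟩ i hi
      cases i with
      | zero => exact h2 0 (by omega)
      | succ t => exact h1 t (by omega)
    · intro h
      exact ⟨fun i hi => h (i+1) (by omega), fun i hi => by
        have : i = 0 := by omega
        subst this
        exact h 0 (by omega)⟩
  rw [hset, m_pc hm, Measure.smul_apply, smul_eq_mul, m_pc hm, Finset.prod_range_succ']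
  rw [mul_comm]
  rfl

end Bernoulli

/-- Lebesgue measure on the unit interval -/
def nu : Measure ℝ := volume.restrict (Set.Icc (0:ℝ) 1)

lemma measurableSet_Ik (k : ℕ) : MeasurableSet (Ik k) := measurableSet_Ioo

instance nu_prob : IsProbabilityMeasure nu := by
  constructor
  rw [nu, Measure.restrict_apply_univ]
  simp [Real.volume_Icc]

lemma measurable_phi (j : Bool) (k : ℕ) : Measurable (phi j k) := by
  cases j
  · have : phi false k = fun x => sl k * x - ((k:ℝ)+1) := by funext x; simp [phi]
    rw [this]; fun_prop
  · have : phi true k = fun x => ((k:ℝ)+2) - sl k * x := by funext x; simp [phi]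
    rw [this]; fun_prop

lemma map_phi (j : Bool) (k : ℕ) :
    Measure.map (phi j k) volume = ENNReal.ofReal (sl k)⁻¹ • volume := by
  have hs := sl_pos k
  cases j
  · have hcomp : phi false k = (fun y : ℝ => y + (-((k:ℝ)+1))) ∘ (fun x => sl k * x) := by
      funext x; simp only [phi, Function.comp, Bool.false_eq_true, if_false]; ring
    rw [hcomp, ← Measure.map_map (measurable_add_const _) (measurable_const_mul _),
      Real.map_volume_mul_left (ne_of_gt hs), Measure.map_smul,
      map_add_right_eq_self volume _, abs_of_pos (inv_pos.mpr hs)]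
  · have hcomp : phi true k = (fun y : ℝ => y + ((k:ℝ)+2)) ∘ (fun x => (-(sl k)) * x) := by
      funext x; simp only [phi, Function.comp, if_true]; ring
    rw [hcomp, ← Measure.map_map (measurable_add_const _) (measurable_const_mul _),
      Real.map_volume_mul_left (by linarith : -(sl k) ≠ 0), Measure.map_smul,
      map_add_right_eq_self volume _]
    congr 1
    rw [abs_inv, abs_neg, abs_of_pos hs]

lemma Ik_subset_Icc (k : ℕ) : Ik k ⊆ Set.Icc (0:ℝ) 1 :=
  (Ik_subset k).trans Set.Ioo_subset_Icc_self

lemma nu_restrict_Ik (k : ℕ) : nu.restrict (Ik k) = volume.restrict (Ik k) := by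
  rw [nu, Measure.restrict_restrict (measurableSet_Ik k),
    Set.inter_eq_self_of_subset_left (Ik_subset_Icc k)]

lemma map_Tc_Ik (j : Bool) (k : ℕ) :
    Measure.map (Tc j 0) (nu.restrict (Ik k)) = ENNReal.ofReal (sl k)⁻¹ • nu := by
  rw [nu_restrict_Ik]
  have h2 : Measure.map (Tc j 0) (volume.restrict (Ik k))
      = Measure.map (phi j k) (volume.restrict (Ik k)) := by
    apply Measure.map_congr
    filter_upwards [ae_restrict_mem (measurableSet_Ik k)] with x hx
    exact Tc_on_Ik j hx
  rw [h2, ← phi_preimage_Ioo01 j k,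
    ← Measure.restrict_map (measurable_phi j k) measurableSet_Ioo, map_phi,
    Measure.restrict_smul]
  congr 1
  exact Measure.restrict_congr_set Ioo_ae_eq_Icc

lemma nu_Ik (k : ℕ) : nu (Ik k) = ENNReal.ofReal (sl k)⁻¹ := by
  rw [nu, Measure.restrict_apply (measurableSet_Ik k),
    Set.inter_eq_self_of_subset_left (Ik_subset_Icc k)]
  unfold Ik
  rw [Real.volume_Ioo]
  congr 1
  have h1 : ((k:ℝ)+1) ≠ 0 := by positivity
  have h2 : ((k:ℝ)+2) ≠ 0 := by positivity
  unfold sl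
  field_simp
  ring

lemma smul_prod_smul {α β : Type*} [MeasurableSpace α] [MeasurableSpace β]
    (μ : Measure α) (ν' : Measure β) [SFinite μ] [SFinite ν'] (c c' : ℝ≥0∞) (hc' : c' ≠ ∞) :
    (c • μ).prod (c' • ν') = (c * c') • μ.prod ν' := by
  ext s hs
  simp only [Measure.smul_apply, smul_eq_mul]
  rw [Measure.prod_apply hs, Measure.prod_apply hs, lintegral_smul_measure]
  simp only [Measure.smul_apply, smul_eq_mul]
  rw [lintegral_const_mul' _ _ hc']
  ring

/-- rank one rectangles -/
def RR (j : Bool) (k : ℕ) : Set ((ℕ → Bool) × ℝ) := pc 1 (fun _ => j) ×ˢ Ik k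

lemma measurable_RR (j : Bool) (k : ℕ) : MeasurableSet (RR j k) :=
  (measurable_pc 1 _).prod measurableSet_Ioo

section Product

variable {p : ℝ} {m : Measure (ℕ → Bool)}

lemma rank1 (hm : IsBernoulli p m) (j : Bool) (k : ℕ) :
    Measure.map L0 ((m.prod nu).restrict (RR j k))
      = (wt p j * ENNReal.ofReal (sl k)⁻¹) • (m.prod nu) := by
  haveI := hm.1
  haveI : IsProbabilityMeasure nu := nu_prob
  have hae : L0 =ᵐ[(m.prod nu).restrict (RR j k)] Prod.map tl (Tc j 0) := by
    filter_upwards [ae_restrict_mem (measurable_RR j k)] with q hq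
    have hq1 : q.1 0 = j := hq.1 0 (by omega)
    show L0 q = (tl q.1, Tc j 0 q.2)
    rw [show L0 q = (tl q.1, Tc (q.1 0) 0 q.2) from rfl, hq1]
  rw [Measure.map_congr hae, RR, ← Measure.prod_restrict,
    ← Measure.map_prod_map _ _ measurable_tl (measurable_Tc j),
    map_tl hm j, map_Tc_Ik j k,
    smul_prod_smul _ _ _ _ ENNReal.ofReal_ne_top]

lemma mu_RR (hm : IsBernoulli p m) (j : Bool) (k : ℕ) :
    (m.prod nu) (RR j k) = wt p j * ENNReal.ofReal (sl k)⁻¹ := by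
  rw [RR, Measure.prod_prod, m_pc1 hm, nu_Ik]

lemma Cyl_zero (f : ℕ → Bool) (d : ℕ → ℕ) : Cyl 0 f d = Set.univ ×ˢ Set.Ioo 0 1 := by
  rw [Cyl, pc_zero]
  rfl

lemma Cyl_succ (n : ℕ) (f : ℕ → Bool) (d : ℕ → ℕ) :
    Cyl (n+1) f d = (RR (f 0) (d 0)) ∩ L0⁻¹' (Cyl n (tl f) (tl d)) := by
  ext q
  obtain ⟨ω, x⟩ := q
  simp only [Cyl, RR, Set.mem_inter_iff, Set.mem_prod, Set.mem_preimage]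
  constructor
  · rintro ⟨hω, hx⟩
    have h0 : ω 0 = f 0 := hω 0 (by omega)
    have hx1 : x ∈ Ik (d 0) := hx.1
    have hx2 : Tc (f 0) 0 x ∈ Del n (tl f) (tl d) := hx.2
    refine ⟨⟨fun i hi => by
        have : i = 0 := by omega
        subst this; exact h0, hx1⟩,
      fun i hi => hω (i+1) (by omega), ?_⟩
    show Tc (ω 0) 0 x ∈ Del n (tl f) (tl d)
    rw [h0]; exact hx2
  · rintro ⟨⟨h1, hIk⟩, h2, h3⟩
    have h0 : ω 0 = f 0 := h1 0 (by omega)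
    have h3' : Tc (ω 0) 0 x ∈ Del n (tl f) (tl d) := h3
    constructor
    · intro i hi
      cases i with
      | zero => exact h0
      | succ t => exact h2 t (by omega)
    · exact ⟨hIk, by rw [← h0]; exact h3'⟩

lemma mu_Ioo01_compl :
    (m.prod nu) (((Set.univ : Set (ℕ → Bool)) ×ˢ Set.Ioo (0:ℝ) 1)ᶜ) = 0 := by
  have h1 : ((Set.univ : Set (ℕ → Bool)) ×ˢ Set.Ioo (0:ℝ) 1)ᶜ
      = (Set.univ : Set (ℕ → Bool)) ×ˢ (Set.Ioo (0:ℝ) 1)ᶜ := by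
    ext q; simp
  have h2 : nu (Set.Ioo (0:ℝ) 1)ᶜ = 0 := by
    rw [nu, Measure.restrict_apply measurableSet_Ioo.compl]
    apply measure_mono_null (show (Set.Ioo (0:ℝ) 1)ᶜ ∩ Set.Icc 0 1 ⊆ ({0, 1} : Set ℝ) from ?_)
    · exact Set.Countable.measure_zero (by
        exact (Set.countable_singleton (1:ℝ)).insert 0) _
    · rintro x ⟨hc, hI⟩
      simp only [Set.mem_compl_iff, Set.mem_Ioo, not_and_or, not_lt] at hc
      simp only [Set.mem_insert_iff, Set.mem_singleton_iff]
      rcases hc with h | h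
      · left; linarith [hI.1]
      · right; linarith [hI.2]
  rw [h1, Measure.prod_prod, h2, mul_zero]

lemma mu_Cyl_zero (f : ℕ → Bool) (d : ℕ → ℕ) (hProb : IsProbabilityMeasure m) :
    (m.prod nu) (Cyl 0 f d) = 1 := by
  haveI : IsProbabilityMeasure nu := nu_prob
  rw [Cyl_zero, Measure.prod_prod, measure_univ, one_mul, nu,
    Measure.restrict_apply measurableSet_Ioo,
    Set.inter_eq_self_of_subset_left Set.Ioo_subset_Icc_self, Real.volume_Ioo]
  norm_num

lemma master (hm : IsBernoulli p m) :
    ∀ (n : ℕ) (f : ℕ → Bool) (d : ℕ → ℕ),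
      Measure.map (L0^[n]) ((m.prod nu).restrict (Cyl n f d))
        = ((m.prod nu) (Cyl n f d)) • (m.prod nu) := by
  haveI := hm.1
  haveI : IsProbabilityMeasure nu := nu_prob
  intro n
  induction n with
  | zero =>
    intro f d
    have h0 : (m.prod nu).restrict (Cyl 0 f d) = m.prod nu := by
      rw [Cyl_zero]
      exact Measure.restrict_eq_self_of_ae_mem (mem_ae_iff.mpr mu_Ioo01_compl)
    rw [h0, Function.iterate_zero, Measure.map_id, mu_Cyl_zero f d hm.1, one_smul]
  | succ n ih =>
    intro f d
    rw [Cyl_succ]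
    have hC' : MeasurableSet (Cyl n (tl f) (tl d)) := measurable_Cyl _ _ _
    have hres : (m.prod nu).restrict (RR (f 0) (d 0) ∩ L0⁻¹' (Cyl n (tl f) (tl d)))
        = ((m.prod nu).restrict (RR (f 0) (d 0))).restrict (L0⁻¹' (Cyl n (tl f) (tl d))) := by
      rw [Measure.restrict_restrict (measurable_L0 hC'), Set.inter_comm]
    have hval : (m.prod nu) (RR (f 0) (d 0) ∩ L0⁻¹' (Cyl n (tl f) (tl d)))
        = (wt p (f 0) * ENNReal.ofReal (sl (d 0))⁻¹) * (m.prod nu) (Cyl n (tl f) (tl d)) := by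
      rw [Set.inter_comm, ← Measure.restrict_apply (measurable_L0 hC'),
        ← Measure.map_apply measurable_L0 hC', rank1 hm, Measure.smul_apply, smul_eq_mul]
    rw [hres, Function.iterate_succ, ← Measure.map_map (measurable_L0.iterate n) measurable_L0,
      ← Measure.restrict_map measurable_L0 hC', rank1 hm, Measure.restrict_smul,
      Measure.map_smul, ih, smul_smul, hval]

lemma hdisjRR : Pairwise (Function.onFun Disjoint fun jk : Bool × ℕ => RR jk.1 jk.2) := by
  rintro ⟨j, k⟩ ⟨j', k'⟩ hne
  rw [Function.onFun, Set.disjoint_left]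
  rintro ⟨ω, x⟩ hq hq'
  apply hne
  have hj : j = j' := by
    have h1 : ω 0 = j := hq.1 0 (by omega)
    have h2 : ω 0 = j' := hq'.1 0 (by omega)
    rw [← h1, ← h2]
  have hk : k = k' := Ik_inj hq.2 hq'.2
  rw [hj, hk]

lemma Icc_cover : Set.Icc (0:ℝ) 1 ⊆
    (⋃ k, Ik k) ∪ ({0} ∪ Set.range (fun n : ℕ => 1/(n:ℝ))) := by
  intro x hx
  by_cases hx0 : x = 0
  · exact Or.inr (Or.inl hx0)
  by_cases hxu : ∃ n : ℕ, x = 1/(n:ℝ)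
  · exact Or.inr (Or.inr (by obtain ⟨n, rfl⟩ := hxu; exact ⟨n, rfl⟩))
  left
  have hxpos : 0 < x := lt_of_le_of_ne hx.1 (Ne.symm hx0)
  have hx1 : x ≠ 1 := by
    intro h
    exact hxu ⟨1, by rw [h]; norm_num⟩
  have hxlt1 : x < 1 := lt_of_le_of_ne hx.2 hx1
  have h1x : 1 < 1/x := by rw [lt_div_iff₀ hxpos]; linarith
  set d := ⌈1/x⌉ with hd
  have hd2 : 2 ≤ d := by
    have : 1 < d := Int.lt_ceil.mpr (by exact_mod_cast h1x)
    omega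
  have hdlow : (d:ℝ) - 1 < 1/x := by
    have := Int.ceil_lt_add_one (1/x)
    linarith
  have hdr : ((d.toNat : ℕ) : ℝ) = (d:ℝ) := by
    have hh : ((d.toNat : ℤ)) = d := Int.toNat_of_nonneg (by omega)
    exact_mod_cast congrArg (Int.cast : ℤ → ℝ) hh
  have hdne : 1/x ≠ (d:ℝ) := by
    intro h
    apply hxu
    refine ⟨d.toNat, ?_⟩
    rw [hdr, ← h, one_div_one_div]
  have hdup : 1/x < (d:ℝ) := lt_of_le_of_ne (Int.le_ceil (1/x)) hdne
  refine Set.mem_iUnion.mpr ⟨d.toNat - 2, ?_⟩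
  have hcast : ((d.toNat - 2 : ℕ) : ℝ) = (d:ℝ) - 2 := by
    have h2 : 2 ≤ d.toNat := by omega
    rw [Nat.cast_sub h2, hdr]
    norm_num
  constructor
  · rw [hcast, show (d:ℝ) - 2 + 2 = (d:ℝ) by ring, div_lt_iff₀ (by exact_mod_cast (by omega : (0:ℤ) < d))]
    have := (div_lt_iff₀ hxpos).mp hdup
    linarith
  · rw [hcast, show (d:ℝ) - 2 + 1 = (d:ℝ) - 1 by ring, lt_div_iff₀ (by push_cast; linarith : (0:ℝ) < (d:ℝ) - 1)]
    have := (lt_div_iff₀ hxpos).mp hdlow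
    linarith

lemma sum_smul_const {ι : Type*} [Countable ι] (c : ι → ℝ≥0∞) (μ' : Measure ((ℕ → Bool) × ℝ)) :
    Measure.sum (fun i => c i • μ') = (∑' i, c i) • μ' := by
  ext s hs
  rw [Measure.sum_apply _ hs]
  simp only [Measure.smul_apply, smul_eq_mul]
  rw [ENNReal.tsum_mul_right]

lemma mu_Ucompl (hProb : IsProbabilityMeasure m) :
    (m.prod nu) ((⋃ jk : Bool × ℕ, RR jk.1 jk.2)ᶜ) = 0 := by
  haveI : IsProbabilityMeasure nu := nu_prob
  apply measure_mono_null
    (show (⋃ jk : Bool × ℕ, RR jk.1 jk.2)ᶜ ⊆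
      Set.univ ×ˢ ((Set.Icc (0:ℝ) 1)ᶜ ∪ ({0} ∪ Set.range (fun n : ℕ => 1/(n:ℝ)))) from ?_)
  · rw [Measure.prod_prod, measure_univ, one_mul]
    apply measure_union_null
    · rw [nu, Measure.restrict_apply measurableSet_Icc.compl, Set.compl_inter_self]
      exact measure_empty
    · have hbadc : ({0} ∪ Set.range (fun n : ℕ => 1/(n:ℝ))).Countable :=
        (Set.countable_singleton 0).union (Set.countable_range _)
      refine le_antisymm ?_ zero_le
      calc nu ({0} ∪ Set.range (fun n : ℕ => 1/(n:ℝ)))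
          ≤ volume ({0} ∪ Set.range (fun n : ℕ => 1/(n:ℝ))) :=
            Measure.le_iff'.mp Measure.restrict_le_self _
        _ = 0 := Set.Countable.measure_zero hbadc _
  · rintro ⟨ω, x⟩ hq
    simp only [Set.mem_prod, Set.mem_univ, true_and]
    by_cases hxI : x ∈ Set.Icc (0:ℝ) 1
    · rcases Icc_cover hxI with hmem | hbad
      · exfalso
        apply hq
        obtain ⟨k, hk⟩ := Set.mem_iUnion.mp hmem
        exact Set.mem_iUnion.mpr ⟨(ω 0, k), ⟨fun i hi => by
          have : i = 0 := by omega
          subst this; rfl, hk⟩⟩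
      · exact Or.inr hbad
    · exact Or.inl hxI

lemma map_L0_eq (hm : IsBernoulli p m) : Measure.map L0 (m.prod nu) = m.prod nu := by
  haveI := hm.1
  haveI : IsProbabilityMeasure nu := nu_prob
  have hRmeas : ∀ jk : Bool × ℕ, MeasurableSet (RR jk.1 jk.2) := fun jk => measurable_RR _ _
  have hUmeas : MeasurableSet (⋃ jk : Bool × ℕ, RR jk.1 jk.2) := MeasurableSet.iUnion hRmeas
  have hres : (m.prod nu).restrict (⋃ jk : Bool × ℕ, RR jk.1 jk.2) = m.prod nu :=
    Measure.restrict_eq_self_of_ae_mem (mem_ae_iff.mpr (mu_Ucompl hm.1))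
  have hsum1 : ∑' jk : Bool × ℕ, (m.prod nu) (RR jk.1 jk.2) = 1 := by
    rw [← measure_iUnion hdisjRR hRmeas]
    have h := measure_add_measure_compl (μ := m.prod nu) hUmeas
    rw [mu_Ucompl hm.1, add_zero, measure_univ] at h
    exact h
  calc Measure.map L0 (m.prod nu)
      = Measure.map L0 ((m.prod nu).restrict (⋃ jk : Bool × ℕ, RR jk.1 jk.2)) := by rw [hres]
    _ = Measure.map L0 (Measure.sum fun jk : Bool × ℕ => (m.prod nu).restrict (RR jk.1 jk.2)) := by
        rw [Measure.restrict_iUnion hdisjRR hRmeas]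
    _ = Measure.sum (fun jk : Bool × ℕ => Measure.map L0 ((m.prod nu).restrict (RR jk.1 jk.2))) :=
        Measure.map_sum measurable_L0.aemeasurable
    _ = Measure.sum (fun jk : Bool × ℕ => ((m.prod nu) (RR jk.1 jk.2)) • (m.prod nu)) := by
        congr 1
        funext jk
        rw [rank1 hm, mu_RR hm]
    _ = (∑' jk : Bool × ℕ, (m.prod nu) (RR jk.1 jk.2)) • (m.prod nu) := sum_smul_const _ _
    _ = m.prod nu := by rw [hsum1, one_smul]

end Product

def extB (n : ℕ) (v : Fin n → Bool) : ℕ → Bool := fun i => if h : i < n then v ⟨i, h⟩ else false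
def extN (n : ℕ) (v : Fin n → ℕ) : ℕ → ℕ := fun i => if h : i < n then v ⟨i, h⟩ else 0

/-- union of all rank `n` fundamental intervals -/
def W (n : ℕ) (f : ℕ → Bool) : Set ℝ := ⋃ v : Fin n → ℕ, Del n f (extN n v)

lemma measurable_W (n : ℕ) (f : ℕ → Bool) : MeasurableSet (W n f) :=
  MeasurableSet.iUnion fun v => measurable_Del n f (extN n v)

lemma mem_W_of {n : ℕ} {f : ℕ → Bool} {x : ℝ} (d : ℕ → ℕ) (h : x ∈ Del n f d) : x ∈ W n f := by
  refine Set.mem_iUnion.mpr ⟨fun i => d i, ?_⟩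
  have heq : Del n f (extN n (fun i : Fin n => d i)) = Del n f d :=
    Del_congr (fun i hi => rfl) (fun i hi => by simp [extN, hi])
  rw [heq]
  exact h

lemma nu_bad : nu ({0} ∪ Set.range (fun n : ℕ => 1/(n:ℝ))) = 0 := by
  have hbadc : ({0} ∪ Set.range (fun n : ℕ => 1/(n:ℝ))).Countable :=
    (Set.countable_singleton 0).union (Set.countable_range _)
  refine le_antisymm ?_ zero_le
  calc nu ({0} ∪ Set.range (fun n : ℕ => 1/(n:ℝ)))
      ≤ volume ({0} ∪ Set.range (fun n : ℕ => 1/(n:ℝ))) :=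
        Measure.le_iff'.mp Measure.restrict_le_self _
    _ = 0 := Set.Countable.measure_zero hbadc _

lemma nu_Iooc : nu ((Set.Ioo (0:ℝ) 1)ᶜ) = 0 := by
  rw [nu, Measure.restrict_apply measurableSet_Ioo.compl]
  apply measure_mono_null (show (Set.Ioo (0:ℝ) 1)ᶜ ∩ Set.Icc 0 1 ⊆ ({0, 1} : Set ℝ) from ?_)
  · exact Set.Countable.measure_zero ((Set.countable_singleton (1:ℝ)).insert 0) _
  · rintro x ⟨hc, hI⟩
    simp only [Set.mem_compl_iff, Set.mem_Ioo, not_and_or, not_lt] at hc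
    simp only [Set.mem_insert_iff, Set.mem_singleton_iff]
    rcases hc with h | h
    · left; linarith [hI.1]
    · right; linarith [hI.2]

lemma Wcov : ∀ (n : ℕ) (f : ℕ → Bool), nu (Set.Ioo 0 1 \ W n f) = 0 := by
  intro n
  induction n with
  | zero =>
    intro f
    apply measure_mono_null (show Set.Ioo (0:ℝ) 1 \ W 0 f ⊆ (∅ : Set ℝ) from ?_) measure_empty
    rintro x ⟨hx, hnW⟩
    exact hnW (mem_W_of (fun _ => 0) hx)
  | succ n ih =>
    intro f
    have key : Set.Ioo (0:ℝ) 1 \ W (n+1) f ⊆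
        ({0} ∪ Set.range fun n : ℕ => 1/(n:ℝ)) ∪
          ⋃ k : ℕ, (Ik k ∩ Tc (f 0) 0 ⁻¹' (Set.Ioo 0 1 \ W n (tl f))) := by
      rintro x ⟨hx, hnW⟩
      rcases Icc_cover (Set.Ioo_subset_Icc_self hx) with hmem | hbad
      · right
        obtain ⟨k, hk⟩ := Set.mem_iUnion.mp hmem
        refine Set.mem_iUnion.mpr ⟨k, hk, ?_⟩
        have hTc : Tc (f 0) 0 x ∈ Set.Ioo (0:ℝ) 1 := by
          have hx' : x ∈ phi (f 0) k ⁻¹' Set.Ioo 0 1 := by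
            rw [phi_preimage_Ioo01]; exact hk
          rw [Tc_on_Ik (f 0) hk]
          exact hx'
        refine ⟨hTc, ?_⟩
        intro hW
        apply hnW
        obtain ⟨v, hv⟩ := Set.mem_iUnion.mp hW
        apply mem_W_of (cons k (extN n v))
        refine ⟨hk, ?_⟩
        show Tc (f 0) 0 x ∈ Del n (tl f) (tl (cons k (extN n v)))
        have heq : Del n (tl f) (tl (cons k (extN n v))) = Del n (tl f) (extN n v) :=
          Del_congr (fun i hi => rfl) (fun i hi => rfl)
        rw [heq]
        exact hv
      · left; exact hbad
    apply measure_mono_null key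
    apply measure_union_null nu_bad
    apply measure_iUnion_null
    intro k
    have hN : MeasurableSet (Set.Ioo (0:ℝ) 1 \ W n (tl f)) :=
      measurableSet_Ioo.diff (measurable_W n (tl f))
    rw [Set.inter_comm, ← Measure.restrict_apply ((measurable_Tc (f 0)) hN),
      ← Measure.map_apply (measurable_Tc (f 0)) hN, map_Tc_Ik (f 0) k,
      Measure.smul_apply, smul_eq_mul, ih (tl f), mul_zero]

/-- the collection of cylinders -/
def CylC : Set (Set ((ℕ → Bool) × ℝ)) := {S | ∃ n f d, S = Cyl n f d}

/-- the cylinder σ-algebra -/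
def mP : MeasurableSpace ((ℕ → Bool) × ℝ) := .generateFrom CylC

lemma mP_le : mP ≤ (inferInstance : MeasurableSpace ((ℕ → Bool) × ℝ)) :=
  MeasurableSpace.generateFrom_le (by rintro S ⟨n, f, d, rfl⟩; exact measurable_Cyl n f d)

lemma mP_meas {S : Set ((ℕ → Bool) × ℝ)} (h : MeasurableSet[mP] S) : MeasurableSet S :=
  mP_le _ h

lemma mem_Cyl_iff : ∀ (n : ℕ) (f : ℕ → Bool) (d : ℕ → ℕ) (q : (ℕ → Bool) × ℝ),
    q ∈ Cyl n f d ↔ ((∀ i, i < n → q.1 i = f i) ∧ (∀ i, i < n → (L0^[i] q).2 ∈ Ik (d i))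
      ∧ (L0^[n] q).2 ∈ Set.Ioo 0 1) := by
  intro n
  induction n with
  | zero =>
    intro f d q
    rw [Cyl_zero]
    constructor
    · rintro ⟨-, hq⟩
      exact ⟨fun i hi => absurd hi (by omega), fun i hi => absurd hi (by omega), hq⟩
    · rintro ⟨-, -, hq⟩
      exact ⟨trivial, hq⟩
  | succ n ih =>
    intro f d q
    rw [Cyl_succ]
    constructor
    · rintro ⟨⟨hpc1, hIk⟩, hpre⟩
      have h0 : q.1 0 = f 0 := hpc1 0 (by omega)
      have hmem := (ih (tl f) (tl d) (L0 q)).mp hpre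
      refine ⟨?_, ?_, ?_⟩
      · intro i hi
        cases i with
        | zero => exact h0
        | succ t => exact hmem.1 t (by omega)
      · intro i hi
        cases i with
        | zero => simpa using hIk
        | succ t =>
          rw [Function.iterate_succ_apply]
          exact hmem.2.1 t (by omega)
      · rw [Function.iterate_succ_apply]
        exact hmem.2.2
    · rintro ⟨h1, h2, h3⟩
      have h0 : q.1 0 = f 0 := h1 0 (by omega)
      refine ⟨⟨fun i hi => by
          have : i = 0 := by omega
          subst this
          exact h0, by simpa using h2 0 (by omega)⟩, ?_⟩
      show L0 q ∈ Cyl n (tl f) (tl d)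
      apply (ih (tl f) (tl d) (L0 q)).mpr
      refine ⟨fun t ht => h1 (t+1) (by omega), fun t ht => ?_, ?_⟩
      · rw [← Function.iterate_succ_apply]
        exact h2 (t+1) (by omega)
      · rw [← Function.iterate_succ_apply]
        exact h3

lemma Cyl_subset {n k : ℕ} {f g : ℕ → Bool} {d e : ℕ → ℕ} (hnk : n ≤ k)
    (hne : (Cyl n f d ∩ Cyl k g e).Nonempty) : Cyl k g e ⊆ Cyl n f d := by
  obtain ⟨q, hq1, hq2⟩ := hne
  rw [mem_Cyl_iff] at hq1 hq2
  intro q' hq'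
  rw [mem_Cyl_iff] at hq' ⊢
  refine ⟨?_, ?_, ?_⟩
  · intro i hi
    rw [hq'.1 i (by omega), ← hq2.1 i (by omega), hq1.1 i hi]
  · intro i hi
    have he : d i = e i := Ik_inj (hq1.2.1 i hi) (hq2.2.1 i (by omega))
    rw [he]
    exact hq'.2.1 i (by omega)
  · rcases eq_or_lt_of_le hnk with rfl | hlt
    · exact hq'.2.2
    · exact Ik_subset (e n) (hq'.2.1 n hlt)

lemma isPiSystem_CylC : IsPiSystem CylC := by
  rintro s ⟨n, f, d, rfl⟩ t ⟨k, g, e, rfl⟩ hne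
  rcases le_total n k with h | h
  · rw [Set.inter_eq_right.mpr (Cyl_subset h hne)]
    exact ⟨k, g, e, rfl⟩
  · rw [Set.inter_eq_left.mpr (Cyl_subset h (by rwa [Set.inter_comm] at hne))]
    exact ⟨n, f, d, rfl⟩

/-- approximability by the cylinder σ-algebra mod null sets -/
def ApproxP (μ' : Measure ((ℕ → Bool) × ℝ)) (S : Set ((ℕ → Bool) × ℝ)) : Prop :=
  ∃ S', MeasurableSet[mP] S' ∧ μ' (S \ S') = 0 ∧ μ' (S' \ S) = 0

lemma ApproxP_empty (μ' : Measure ((ℕ → Bool) × ℝ)) : ApproxP μ' ∅ :=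
  ⟨∅, @MeasurableSet.empty _ mP, by simp, by simp⟩

lemma ApproxP_compl {μ' : Measure ((ℕ → Bool) × ℝ)} {S : Set ((ℕ → Bool) × ℝ)}
    (h : ApproxP μ' S) : ApproxP μ' Sᶜ := by
  obtain ⟨S', h1, h2, h3⟩ := h
  refine ⟨S'ᶜ, MeasurableSet.compl h1, ?_, ?_⟩
  · rw [show Sᶜ \ S'ᶜ = S' \ S by ext q; simp [Set.mem_diff]; tauto]
    exact h3
  · rw [show S'ᶜ \ Sᶜ = S \ S' by ext q; simp [Set.mem_diff]; tauto]
    exact h2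

lemma ApproxP_iUnion {μ' : Measure ((ℕ → Bool) × ℝ)} {S : ℕ → Set ((ℕ → Bool) × ℝ)}
    (h : ∀ i, ApproxP μ' (S i)) : ApproxP μ' (⋃ i, S i) := by
  choose S' hmP h1 h2 using h
  refine ⟨⋃ i, S' i, MeasurableSet.iUnion hmP, ?_, ?_⟩
  · apply measure_mono_null (show (⋃ i, S i) \ (⋃ i, S' i) ⊆ ⋃ i, (S i \ S' i) from ?_)
      (measure_iUnion_null h1)
    rintro q ⟨hq, hnq⟩
    obtain ⟨i, hi⟩ := Set.mem_iUnion.mp hq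
    exact Set.mem_iUnion.mpr ⟨i, hi, fun hq' => hnq (Set.mem_iUnion.mpr ⟨i, hq'⟩)⟩
  · apply measure_mono_null (show (⋃ i, S' i) \ (⋃ i, S i) ⊆ ⋃ i, (S' i \ S i) from ?_)
      (measure_iUnion_null h2)
    rintro q ⟨hq, hnq⟩
    obtain ⟨i, hi⟩ := Set.mem_iUnion.mp hq
    exact Set.mem_iUnion.mpr ⟨i, hi, fun hq' => hnq (Set.mem_iUnion.mpr ⟨i, hq'⟩)⟩

lemma ApproxP_inter {μ' : Measure ((ℕ → Bool) × ℝ)} {S T : Set ((ℕ → Bool) × ℝ)}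
    (hS : ApproxP μ' S) (hT : ApproxP μ' T) : ApproxP μ' (S ∩ T) := by
  obtain ⟨S', hS1, hS2, hS3⟩ := hS
  obtain ⟨T', hT1, hT2, hT3⟩ := hT
  refine ⟨S' ∩ T', MeasurableSet.inter hS1 hT1, ?_, ?_⟩
  · apply measure_mono_null (show (S ∩ T) \ (S' ∩ T') ⊆ (S \ S') ∪ (T \ T') from ?_)
      (measure_union_null hS2 hT2)
    rintro q ⟨⟨hqS, hqT⟩, hn⟩
    by_cases h : q ∈ S'
    · right; exact ⟨hqT, fun hq' => hn ⟨h, hq'⟩⟩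
    · left; exact ⟨hqS, h⟩
  · apply measure_mono_null (show (S' ∩ T') \ (S ∩ T) ⊆ (S' \ S) ∪ (T' \ T) from ?_)
      (measure_union_null hS3 hT3)
    rintro q ⟨⟨hqS, hqT⟩, hn⟩
    by_cases h : q ∈ S
    · right; exact ⟨hqT, fun hq' => hn ⟨h, hq'⟩⟩
    · left; exact ⟨hqS, h⟩

section Approx

variable {m : Measure (ℕ → Bool)}

lemma approx_pc_univ (hP : IsProbabilityMeasure m) (n : ℕ) (f : ℕ → Bool) :
    ApproxP (m.prod nu) (pc n f ×ˢ (Set.univ : Set ℝ)) := by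
  haveI := hP
  refine ⟨⋃ v : Fin n → ℕ, Cyl n f (extN n v), MeasurableSet.iUnion fun v =>
    MeasurableSpace.measurableSet_generateFrom ⟨n, f, extN n v, rfl⟩, ?_, ?_⟩
  · have hsub : (pc n f ×ˢ (Set.univ : Set ℝ)) \ (⋃ v : Fin n → ℕ, Cyl n f (extN n v)) ⊆
        (Set.univ : Set (ℕ → Bool)) ×ˢ ((Set.Ioo 0 1 \ W n f) ∪ (Set.Ioo (0:ℝ) 1)ᶜ) := by
      rintro ⟨ω, x⟩ ⟨⟨hω, -⟩, hn⟩
      refine ⟨trivial, ?_⟩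
      by_cases hx : x ∈ Set.Ioo (0:ℝ) 1
      · left
        refine ⟨hx, fun hW => ?_⟩
        obtain ⟨v, hv⟩ := Set.mem_iUnion.mp hW
        exact hn (Set.mem_iUnion.mpr ⟨v, hω, hv⟩)
      · right; exact hx
    apply measure_mono_null hsub
    rw [Measure.prod_prod, measure_univ, one_mul]
    exact measure_union_null (Wcov n f) nu_Iooc
  · apply measure_mono_null (show _ ⊆ (∅ : Set ((ℕ → Bool) × ℝ)) from ?_) measure_empty
    rintro q ⟨hq, hnq⟩
    obtain ⟨v, hv⟩ := Set.mem_iUnion.mp hq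
    exact hnq ⟨hv.1, trivial⟩

lemma approx_univ_Ioo (hP : IsProbabilityMeasure m) (a b : ℝ) :
    ApproxP (m.prod nu) ((Set.univ : Set (ℕ → Bool)) ×ˢ Set.Ioo a b) := by
  haveI := hP
  set T : Set ((ℕ → Bool) × ℝ) := (Set.univ : Set (ℕ → Bool)) ×ˢ Set.Ioo a b with hT
  set SK : ℕ → Set ((ℕ → Bool) × ℝ) := fun K =>
    ⋃ (v : (Fin K → Bool) × (Fin K → ℕ)),
      ⋃ (_ : Del K (extB K v.1) (extN K v.2) ⊆ Set.Ioo a b),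
        Cyl K (extB K v.1) (extN K v.2) with hSKdef
  have hSKmP : ∀ K, MeasurableSet[mP] (SK K) := fun K =>
    MeasurableSet.iUnion fun v => MeasurableSet.iUnion fun _ =>
      MeasurableSpace.measurableSet_generateFrom ⟨K, _, _, rfl⟩
  have hSKsub : ∀ K, SK K ⊆ T := by
    intro K q hq
    obtain ⟨v, hv⟩ := Set.mem_iUnion.mp hq
    obtain ⟨hsub, hq'⟩ := Set.mem_iUnion.mp hv
    exact ⟨trivial, hsub hq'.2⟩
  have hdiff : ∀ K, (m.prod nu) (T \ SK K) ≤
      ENNReal.ofReal ((1/2)^K) + ENNReal.ofReal ((1/2)^K) := by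
    intro K
    have hsub : T \ SK K ⊆
        (⋃ g : Fin K → Bool, (pc K (extB K g)) ×ˢ (Set.Ioo 0 1 \ W K (extB K g)))
        ∪ (Set.univ : Set (ℕ → Bool)) ×ˢ
            ((Set.Ioo a (a + (1/2)^K) ∪ Set.Ioo (b - (1/2)^K) b)
              ∪ (Set.Ioo a b \ Set.Ioo 0 1)) := by
      rintro ⟨ω, x⟩ ⟨⟨-, hx⟩, hnS⟩
      have hωpc : ω ∈ pc K (extB K (fun i : Fin K => ω i)) := by
        intro i hi
        simp [extB, hi]
      by_cases hx01 : x ∈ Set.Ioo (0:ℝ) 1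
      · by_cases hxW : x ∈ W K (extB K (fun i : Fin K => ω i))
        · obtain ⟨v, hv⟩ := Set.mem_iUnion.mp hxW
          by_cases hsubI : Del K (extB K (fun i : Fin K => ω i)) (extN K v) ⊆ Set.Ioo a b
          · exfalso
            apply hnS
            exact Set.mem_iUnion.mpr ⟨((fun i : Fin K => ω i), v),
              Set.mem_iUnion.mpr ⟨hsubI, hωpc, hv⟩⟩
          · right
            refine ⟨trivial, ?_⟩
            obtain ⟨u, w, hu0, hw1, hlen, hEq⟩ :=
              DelStruct K (extB K (fun i : Fin K => ω i)) (extN K v)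
            rw [hEq] at hv hsubI
            have hcase : u < a ∨ b < w := by
              by_contra hcon
              push_neg at hcon
              exact hsubI (Set.Ioo_subset_Ioo hcon.1 hcon.2)
            left
            rcases hcase with h | h
            · left; exact ⟨hx.1, by linarith [hv.1, hv.2]⟩
            · right; exact ⟨by linarith [hv.1, hv.2], hx.2⟩
        · left
          exact Set.mem_iUnion.mpr ⟨(fun i : Fin K => ω i), hωpc, hx01, hxW⟩
      · right
        exact ⟨trivial, Or.inr ⟨hx, hx01⟩⟩
    calc (m.prod nu) (T \ SK K) ≤ _ := measure_mono hsub
      _ ≤ (m.prod nu) (⋃ g : Fin K → Bool, (pc K (extB K g)) ×ˢ (Set.Ioo 0 1 \ W K (extB K g)))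
          + (m.prod nu) ((Set.univ : Set (ℕ → Bool)) ×ˢ
            ((Set.Ioo a (a + (1/2)^K) ∪ Set.Ioo (b - (1/2)^K) b)
              ∪ (Set.Ioo a b \ Set.Ioo 0 1))) := measure_union_le _ _
      _ ≤ 0 + (ENNReal.ofReal ((1/2)^K) + ENNReal.ofReal ((1/2)^K)) := by
          apply add_le_add
          · refine le_of_eq (measure_iUnion_null fun g => ?_)
            rw [Measure.prod_prod, Wcov K (extB K g), mul_zero]
          · rw [Measure.prod_prod, measure_univ, one_mul]
            calc nu ((Set.Ioo a (a + (1/2)^K) ∪ Set.Ioo (b - (1/2)^K) b)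
                  ∪ (Set.Ioo a b \ Set.Ioo 0 1))
                ≤ nu (Set.Ioo a (a + (1/2)^K) ∪ Set.Ioo (b - (1/2)^K) b)
                  + nu (Set.Ioo a b \ Set.Ioo 0 1) := measure_union_le _ _
              _ ≤ (nu (Set.Ioo a (a + (1/2)^K)) + nu (Set.Ioo (b - (1/2)^K) b)) + 0 := by
                  refine add_le_add (measure_union_le _ _) (le_of_eq ?_)
                  exact measure_mono_null (fun x hx => hx.2) nu_Iooc
              _ ≤ ENNReal.ofReal ((1/2)^K) + ENNReal.ofReal ((1/2)^K) := by
                  rw [add_zero]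
                  apply add_le_add
                  · calc nu (Set.Ioo a (a + (1/2)^K))
                        ≤ volume (Set.Ioo a (a + (1/2)^K)) :=
                          Measure.le_iff'.mp Measure.restrict_le_self _
                      _ = ENNReal.ofReal ((1/2)^K) := by
                          rw [Real.volume_Ioo]; congr 1; ring
                  · calc nu (Set.Ioo (b - (1/2)^K) b)
                        ≤ volume (Set.Ioo (b - (1/2)^K) b) :=
                          Measure.le_iff'.mp Measure.restrict_le_self _
                      _ = ENNReal.ofReal ((1/2)^K) := by
                          rw [Real.volume_Ioo]; congr 1; ring
      _ = ENNReal.ofReal ((1/2)^K) + ENNReal.ofReal ((1/2)^K) := by rw [zero_add]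
  have hsum : (∑' K : ℕ, (m.prod nu) (T \ SK K)) ≠ ∞ := by
    apply ne_top_of_le_ne_top
      (b := ∑' K : ℕ, (ENNReal.ofReal ((1/2)^K) + ENNReal.ofReal ((1/2)^K)))
    · rw [ENNReal.tsum_add]
      apply ENNReal.add_ne_top.mpr
      constructor <;>
      · rw [← ENNReal.ofReal_tsum_of_nonneg (fun K => by positivity)
            (summable_geometric_of_lt_one (by norm_num) (by norm_num))]
        exact ENNReal.ofReal_ne_top
    · exact ENNReal.tsum_le_tsum hdiff
  have hnull : (m.prod nu) (Filter.limsup (fun K => T \ SK K) Filter.atTop) = 0 :=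
    measure_limsup_atTop_eq_zero hsum
  refine ⟨Filter.limsup SK Filter.atTop, ?_, ?_, ?_⟩
  · rw [Filter.limsup_eq_iInf_iSup_of_nat]
    exact MeasurableSet.iInter fun n => MeasurableSet.iUnion fun i =>
      MeasurableSet.iUnion fun _ => hSKmP i
  · apply measure_mono_null ?_ hnull
    rintro q ⟨hqT, hqS⟩
    have hqS' : ¬ q ∈ Filter.limsup SK Filter.atTop := hqS
    rw [Filter.mem_limsup_iff_frequently_mem] at hqS'
    show q ∈ Filter.limsup (fun K => T \ SK K) Filter.atTop
    rw [Filter.mem_limsup_iff_frequently_mem]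
    have hev : ∀ᶠ K in Filter.atTop, q ∉ SK K := Filter.not_frequently.mp hqS'
    exact (hev.mono fun K hK => ⟨hqT, hK⟩).frequently
  · apply measure_mono_null (show _ ⊆ (∅ : Set ((ℕ → Bool) × ℝ)) from ?_) measure_empty
    rintro q ⟨hq, hnq⟩
    apply hnq
    have hq' : q ∈ Filter.limsup SK Filter.atTop := hq
    rw [Filter.mem_limsup_iff_frequently_mem] at hq'
    obtain ⟨K, hK⟩ := hq'.exists
    exact hSKsub K hK

lemma approx_all (hP : IsProbabilityMeasure m) :
    ∀ S : Set ((ℕ → Bool) × ℝ), MeasurableSet S → ApproxP (m.prod nu) S := by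
  haveI := hP
  have hA : ∀ A : Set (ℕ → Bool), MeasurableSet A → ApproxP (m.prod nu) (A ×ˢ (Set.univ : Set ℝ)) := by
    refine fun A hA => MeasurableSpace.induction_on_inter
      (C := fun A _ => ApproxP (m.prod nu) (A ×ˢ (Set.univ : Set ℝ)))
      gen_pc isPiSystem_pcC ?_ ?_ ?_ ?_ A hA
    · show ApproxP (m.prod nu) ((∅ : Set (ℕ → Bool)) ×ˢ (Set.univ : Set ℝ))
      rw [Set.empty_prod]
      exact ApproxP_empty _
    · rintro t ⟨n, f, rfl⟩
      exact approx_pc_univ hP n f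
    · intro t _ ht
      have : tᶜ ×ˢ (Set.univ : Set ℝ) = (t ×ˢ (Set.univ : Set ℝ))ᶜ := by
        ext q; simp
      rw [this]
      exact ApproxP_compl ht
    · intro g _ _ hg
      rw [Set.iUnion_prod_const]
      exact ApproxP_iUnion hg
  have hB : ∀ B : Set ℝ, MeasurableSet B →
      ApproxP (m.prod nu) ((Set.univ : Set (ℕ → Bool)) ×ˢ B) := by
    refine fun B hB => MeasurableSpace.induction_on_inter
      (C := fun B _ => ApproxP (m.prod nu) ((Set.univ : Set (ℕ → Bool)) ×ˢ B))
      ((BorelSpace.measurable_eq (α := ℝ)).trans Real.borel_eq_generateFrom_Ioo_rat)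
      Real.isPiSystem_Ioo_rat ?_ ?_ ?_ ?_ B hB
    · show ApproxP (m.prod nu) ((Set.univ : Set (ℕ → Bool)) ×ˢ (∅ : Set ℝ))
      rw [Set.prod_empty]
      exact ApproxP_empty _
    · rintro t ht
      simp only [Set.mem_iUnion, Set.mem_singleton_iff] at ht
      obtain ⟨aq, bq, -, rfl⟩ := ht
      exact approx_univ_Ioo hP _ _
    · intro t _ ht
      have : (Set.univ : Set (ℕ → Bool)) ×ˢ tᶜ = ((Set.univ : Set (ℕ → Bool)) ×ˢ t)ᶜ := by
        ext q; simp
      rw [this]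
      exact ApproxP_compl ht
    · intro g _ _ hg
      rw [Set.prod_iUnion]
      exact ApproxP_iUnion hg
  refine fun S hS => MeasurableSpace.induction_on_inter
    (C := fun S _ => ApproxP (m.prod nu) S)
    generateFrom_prod.symm isPiSystem_prod ?_ ?_ ?_ ?_ S hS
  · exact ApproxP_empty _
  · rintro t ⟨A, hA', B, hB', rfl⟩
    have heq : A ×ˢ B = (A ×ˢ (Set.univ : Set ℝ)) ∩ ((Set.univ : Set (ℕ → Bool)) ×ˢ B) := by
      rw [Set.prod_inter_prod, Set.inter_univ, Set.univ_inter]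
    show ApproxP (m.prod nu) (A ×ˢ B)
    rw [heq]
    exact ApproxP_inter (hA A hA') (hB B hB')
  · intro t _ ht
    exact ApproxP_compl ht
  · intro g _ _ hg
    exact ApproxP_iUnion hg

end Approx

section Final

variable {p : ℝ} {m : Measure (ℕ → Bool)}

lemma kappa_agree (hm : IsBernoulli p m) {E : Set ((ℕ → Bool) × ℝ)}
    (hE : MeasurableSet E) (hinv : L0⁻¹' E = E) :
    ∀ S, MeasurableSet[mP] S →
      (m.prod nu) (S ∩ E) = (m.prod nu) S * (m.prod nu) E := by
  haveI := hm.1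
  have hEn : ∀ n, (L0^[n])⁻¹' E = E := by
    intro n
    induction n with
    | zero => rfl
    | succ n ih => rw [Function.iterate_succ', Set.preimage_comp, hinv, ih]
  refine fun S hS => MeasurableSpace.induction_on_inter
    (C := fun S _ => (m.prod nu) (S ∩ E) = (m.prod nu) S * (m.prod nu) E)
    (m := mP) rfl isPiSystem_CylC ?_ ?_ ?_ ?_ S hS
  · simp
  · rintro t ⟨n, f, d, rfl⟩
    have hpre : MeasurableSet ((L0^[n])⁻¹' E) := (measurable_L0.iterate n) hE
    calc (m.prod nu) (Cyl n f d ∩ E)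
        = (m.prod nu) ((L0^[n])⁻¹' E ∩ Cyl n f d) := by rw [hEn n, Set.inter_comm]
      _ = ((m.prod nu).restrict (Cyl n f d)) ((L0^[n])⁻¹' E) := by
          rw [Measure.restrict_apply hpre]
      _ = (Measure.map (L0^[n]) ((m.prod nu).restrict (Cyl n f d))) E :=
          (Measure.map_apply (measurable_L0.iterate n) hE).symm
      _ = ((m.prod nu) (Cyl n f d) • (m.prod nu)) E := by rw [master hm n f d]
      _ = (m.prod nu) (Cyl n f d) * (m.prod nu) E := by
          rw [Measure.smul_apply, smul_eq_mul]
  · intro t htmP ht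
    have htm : MeasurableSet t := mP_meas htmP
    have h1 : tᶜ ∩ E = E \ (E ∩ t) := by
      ext q; simp only [Set.mem_inter_iff, Set.mem_compl_iff, Set.mem_diff]; tauto
    rw [h1, measure_diff Set.inter_subset_left ((hE.inter htm).nullMeasurableSet)
      (measure_ne_top _ _), Set.inter_comm, ht, prob_compl_eq_one_sub htm,
      ENNReal.sub_mul (fun _ _ => measure_ne_top _ _), one_mul]
  · intro g hdisj hgm hC
    have hgm' : ∀ i, MeasurableSet (g i) := fun i => mP_meas (hgm i)
    calc (m.prod nu) ((⋃ i, g i) ∩ E) = (m.prod nu) (⋃ i, g i ∩ E) := by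
          rw [Set.iUnion_inter]
      _ = ∑' i, (m.prod nu) (g i ∩ E) := measure_iUnion
            (hdisj.mono fun i j h => h.mono Set.inter_subset_left Set.inter_subset_left)
            (fun i => (hgm' i).inter hE)
      _ = ∑' i, (m.prod nu) (g i) * (m.prod nu) E := tsum_congr hC
      _ = (∑' i, (m.prod nu) (g i)) * (m.prod nu) E := ENNReal.tsum_mul_right
      _ = (m.prod nu) (⋃ i, g i) * (m.prod nu) E := by rw [measure_iUnion hdisj hgm']

end Final


end L0Aux
/-- for `0 < p < 1` the measure `m_p × λ` is invariant and ergodic for the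
random 0-Lüroth transformation `L_0`. -/
theorem L0_measurePreserving_ergodic (p : ℝ) (hp0 : 0 < p) (hp1 : p < 1)
    (m : Measure (ℕ → Bool)) (hm : IsBernoulli p m) :
    MeasurePreserving L0
        (m.prod (volume.restrict (Set.Icc (0:ℝ) 1)))
        (m.prod (volume.restrict (Set.Icc (0:ℝ) 1))) ∧
    Ergodic L0 (m.prod (volume.restrict (Set.Icc (0:ℝ) 1))) := by
  classical
  haveI := hm.1
  have hMP : MeasurePreserving L0
      (m.prod (volume.restrict (Set.Icc (0:ℝ) 1)))
      (m.prod (volume.restrict (Set.Icc (0:ℝ) 1))) :=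
    ⟨L0Aux.measurable_L0, L0Aux.map_L0_eq hm⟩
  refine ⟨hMP, hMP, ⟨?_⟩⟩
  intro E hE hinv
  rw [Filter.eventuallyConst_set']
  obtain ⟨S', hS'mP, h1, h2⟩ := L0Aux.approx_all hm.1 E hE
  have key := L0Aux.kappa_agree hm hE hinv S' hS'mP
  set μ' := m.prod L0Aux.nu with hμ'
  have hES' : μ' (E ∩ S') = μ' E := by
    refine le_antisymm (measure_mono Set.inter_subset_left) ?_
    calc μ' E ≤ μ' (E ∩ S') + μ' (E \ S') := measure_le_inter_add_diff _ _ _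
      _ = μ' (E ∩ S') := by rw [h1, add_zero]
  have hS'E : μ' S' = μ' E := by
    apply le_antisymm
    · calc μ' S' ≤ μ' (S' ∩ E) + μ' (S' \ E) := measure_le_inter_add_diff _ _ _
        _ = μ' (S' ∩ E) := by rw [h2, add_zero]
        _ ≤ μ' E := measure_mono Set.inter_subset_right
    · calc μ' E ≤ μ' (E ∩ S') + μ' (E \ S') := measure_le_inter_add_diff _ _ _
        _ = μ' (E ∩ S') := by rw [h1, add_zero]
        _ ≤ μ' S' := measure_mono Set.inter_subset_right
  have hsq : μ' E = μ' E * μ' E := by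
    calc μ' E = μ' (E ∩ S') := hES'.symm
      _ = μ' (S' ∩ E) := by rw [Set.inter_comm]
      _ = μ' S' * μ' E := key
      _ = μ' E * μ' E := by rw [hS'E]
  rcases eq_or_ne (μ' E) 0 with h0 | h0
  · left
    exact ae_eq_empty.mpr h0
  · right
    have htop : μ' E ≠ ∞ := measure_ne_top _ _
    have hc := ENNReal.mul_inv_cancel h0 htop
    have h1' : μ' E = 1 := by
      calc μ' E = μ' E * (μ' E * (μ' E)⁻¹) := by rw [hc, mul_one]
        _ = (μ' E * μ' E) * (μ' E)⁻¹ := by rw [mul_assoc]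
        _ = μ' E * (μ' E)⁻¹ := by rw [← hsq]
        _ = 1 := hc
    have : μ' Eᶜ = 0 := by
      rw [prob_compl_eq_one_sub hE, h1', tsub_self]
    exact ae_eq_univ.mpr this
end
end
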